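/- arXiv:1810.12167 — 6 statements merged into one kernel-verified Lean document; each statement's English description precedes it below -/
import Mathlib

section
/- Under the stated approximation hypotheses, the controllability maps converge strongly: for every f ∈ L²((0,T),U), one has ‖𝓑_n^T f − 𝓑^T f‖_H → 0 as n → ∞. -/
open MeasureTheory Set Filter
open scoped InnerProductSpace Topology ENNReal

/-- Joint continuity of a strongly continuous, locally bounded operator family,
after clamping the time parameter to `[0, T]`. -/
lemma jointCont_clamped {H : Type*} [NormedAddCommGroup H] [NormedSpace ℂ H]
    (T C : ℝ) (hT : 0 ≤ T) (S : ℝ → H →L[ℂ] H)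
    (hcont : ∀ x : H, ContinuousOn (fun t => S t x) (Ici (0:ℝ)))
    (hb : ∀ t ∈ Icc (0:ℝ) T, ‖S t‖ ≤ C) :
    Continuous fun p : ℝ × H => S (min (max p.1 0) T) p.2 := by
  have hφcont : Continuous fun t : ℝ => min (max t 0) T := by continuity
  have hφmem : ∀ t : ℝ, min (max t 0) T ∈ Icc (0:ℝ) T := fun t =>
    ⟨le_min (le_max_right _ _) hT, min_le_right _ _⟩
  rw [continuous_iff_continuousAt]
  rintro ⟨t₀, x₀⟩
  rw [ContinuousAt, tendsto_iff_norm_sub_tendsto_zero]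
  have key : ∀ p : ℝ × H,
      ‖S (min (max p.1 0) T) p.2 - S (min (max t₀ 0) T) x₀‖ ≤
        C * ‖p.2 - x₀‖ +
          ‖S (min (max p.1 0) T) x₀ - S (min (max t₀ 0) T) x₀‖ := by
    intro p
    have h1 : ‖S (min (max p.1 0) T) (p.2 - x₀)‖ ≤ C * ‖p.2 - x₀‖ := by
      calc ‖S (min (max p.1 0) T) (p.2 - x₀)‖
          ≤ ‖S (min (max p.1 0) T)‖ * ‖p.2 - x₀‖ :=
            (S _).le_opNorm _
        _ ≤ C * ‖p.2 - x₀‖ :=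
            mul_le_mul_of_nonneg_right (hb _ (hφmem _)) (norm_nonneg _)
    calc ‖S (min (max p.1 0) T) p.2 - S (min (max t₀ 0) T) x₀‖
        = ‖S (min (max p.1 0) T) (p.2 - x₀) +
            (S (min (max p.1 0) T) x₀ - S (min (max t₀ 0) T) x₀)‖ := by
          rw [map_sub]; congr 1; abel
      _ ≤ ‖S (min (max p.1 0) T) (p.2 - x₀)‖ +
            ‖S (min (max p.1 0) T) x₀ - S (min (max t₀ 0) T) x₀‖ :=
          norm_add_le _ _
      _ ≤ _ := by gcongr
  refine squeeze_zero (fun p => norm_nonneg _) key ?_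
  have hc : Continuous fun t : ℝ => S (min (max t 0) T) x₀ :=
    (hcont x₀).comp_continuous hφcont fun t => (hφmem t).1
  have h2 : Tendsto (fun p : ℝ × H => S (min (max p.1 0) T) x₀)
      (𝓝 (t₀, x₀)) (𝓝 (S (min (max t₀ 0) T) x₀)) :=
    (hc.tendsto t₀).comp (continuous_fst.tendsto (t₀, x₀))
  have h2' := tendsto_iff_norm_sub_tendsto_zero.mp h2
  have h1' : Tendsto (fun p : ℝ × H => C * ‖p.2 - x₀‖) (𝓝 (t₀, x₀)) (𝓝 0) := by
    have : Tendsto (fun p : ℝ × H => p.2) (𝓝 (t₀, x₀)) (𝓝 x₀) :=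
      continuous_snd.tendsto _
    have := (tendsto_iff_norm_sub_tendsto_zero.mp this).const_mul C
    simpa using this
  simpa using h1'.add h2'

theorem controllability_maps_converge_strongly
    {H U : Type*}
    [NormedAddCommGroup H] [InnerProductSpace ℂ H] [CompleteSpace H]
    [NormedAddCommGroup U] [InnerProductSpace ℂ U] [CompleteSpace U]
    (a T : ℝ) (hT : 0 < T)
    (S : ℝ → H →L[ℂ] H) (Sn : ℕ → ℝ → H →L[ℂ] H)
    (hS0 : S 0 = 1)
    (hSsemi : ∀ t s : ℝ, 0 ≤ t → 0 ≤ s → S (t + s) = (S t).comp (S s))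
    (hScont : ∀ x : H, ContinuousOn (fun t => S t x) (Ici (0:ℝ)))
    (hSbound : ∀ t : ℝ, 0 ≤ t → ‖S t‖ ≤ Real.exp (-(t * a)))
    (hSn0 : ∀ n, Sn n 0 = 1)
    (hSnsemi : ∀ n, ∀ t s : ℝ, 0 ≤ t → 0 ≤ s →
      Sn n (t + s) = (Sn n t).comp (Sn n s))
    (hSncont : ∀ n, ∀ x : H, ContinuousOn (fun t => Sn n t x) (Ici (0:ℝ)))
    (hSnbound : ∀ n, ∀ t : ℝ, 0 ≤ t → ‖Sn n t‖ ≤ Real.exp (-(t * a)))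
    (hSconv : ∀ t : ℝ, 0 < t → ∀ x : H,
      Tendsto (fun n => Sn n t x) atTop (nhds (S t x)))
    (B : U →L[ℂ] H) (Bn : ℕ → U →L[ℂ] H)
    (hBconv : ∀ v : U, Tendsto (fun n => Bn n v) atTop (nhds (B v)))
    (hBadjconv : ∀ x : H,
      Tendsto (fun n => ContinuousLinearMap.adjoint (Bn n) x) atTop
        (nhds (ContinuousLinearMap.adjoint B x)))
    (𝓑T : Lp U 2 (volume.restrict (Ioo (0:ℝ) T)) →L[ℂ] H)
    (h𝓑T : ∀ f : Lp U 2 (volume.restrict (Ioo (0:ℝ) T)),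
      𝓑T f = ∫ s in Ioo (0:ℝ) T, S (T - s) (B (f s)))
    (𝓑Tn : ℕ → (Lp U 2 (volume.restrict (Ioo (0:ℝ) T)) →L[ℂ] H))
    (h𝓑Tn : ∀ n, ∀ f : Lp U 2 (volume.restrict (Ioo (0:ℝ) T)),
      𝓑Tn n f = ∫ s in Ioo (0:ℝ) T, Sn n (T - s) (Bn n (f s))) :
    ∀ f : Lp U 2 (volume.restrict (Ioo (0:ℝ) T)),
      Tendsto (fun n => ‖𝓑Tn n f - 𝓑T f‖) atTop (nhds 0) := by
  intro f
  haveI : Fact (volume (Ioo (0:ℝ) T) < ⊤) :=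
    ⟨by rw [Real.volume_Ioo]; exact ENNReal.ofReal_lt_top⟩
  haveI : IsFiniteMeasure (volume.restrict (Ioo (0:ℝ) T)) := by
    constructor
    rw [Measure.restrict_apply_univ]
    exact this.out
  -- uniform bound for Bn via Banach–Steinhaus
  obtain ⟨Cb, hCb⟩ : ∃ Cb, ∀ n, ‖Bn n‖ ≤ Cb := by
    apply banach_steinhaus (g := Bn)
    intro v
    obtain ⟨c, hc⟩ := ((hBconv v).norm.bddAbove_range)
    exact ⟨c, fun n => hc ⟨n, rfl⟩⟩
  set C : ℝ := Real.exp (|a| * T) with hC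
  have hCpos : 0 < C := Real.exp_pos _
  have hbnd : ∀ (R : ℝ → H →L[ℂ] H),
      (∀ t : ℝ, 0 ≤ t → ‖R t‖ ≤ Real.exp (-(t * a))) →
      ∀ t ∈ Icc (0:ℝ) T, ‖R t‖ ≤ C := by
    intro R hR t ht
    refine (hR t ht.1).trans (Real.exp_le_exp.mpr ?_)
    calc -(t * a) ≤ |t * a| := neg_le_abs _
      _ = t * |a| := by rw [abs_mul, abs_of_nonneg ht.1]
      _ ≤ T * |a| := mul_le_mul_of_nonneg_right ht.2 (abs_nonneg a)
      _ = |a| * T := mul_comm _ _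
  have hSbC : ∀ t ∈ Icc (0:ℝ) T, ‖S t‖ ≤ C := hbnd S hSbound
  have hSnbC : ∀ n, ∀ t ∈ Icc (0:ℝ) T, ‖Sn n t‖ ≤ C := fun n => hbnd _ (hSnbound n)
  -- integrable dominating function
  have hfint : Integrable (fun s => ‖f s‖) (volume.restrict (Ioo (0:ℝ) T)) := by
    have h2 : MemLp (f : ℝ → U) 2 (volume.restrict (Ioo (0:ℝ) T)) := Lp.memLp f
    exact (h2.mono_exponent (by norm_num : (1:ℝ≥0∞) ≤ 2)).integrable le_rfl |>.norm
  have hbound_int : Integrable (fun s => C * (Cb * ‖f s‖)) (volume.restrict (Ioo (0:ℝ) T)) :=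
    (hfint.const_mul Cb).const_mul C
  have hmemae : ∀ᵐ s ∂(volume.restrict (Ioo (0:ℝ) T)), s ∈ Ioo (0:ℝ) T := ae_restrict_mem measurableSet_Ioo
  -- measurability of the integrands
  have F_meas : ∀ n, AEStronglyMeasurable
      (fun s => Sn n (T - s) (Bn n (f s))) (volume.restrict (Ioo (0:ℝ) T)) := by
    intro n
    have hG := jointCont_clamped T C hT.le (Sn n) (hSncont n) (hSnbC n)
    have h1 : AEStronglyMeasurable (fun s : ℝ => ((T - s : ℝ), Bn n (f s))) (volume.restrict (Ioo (0:ℝ) T)) := by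
      refine AEStronglyMeasurable.prodMk ?_ ?_
      · exact (measurable_const.sub measurable_id).aestronglyMeasurable
      · exact (Bn n).continuous.comp_aestronglyMeasurable (Lp.aestronglyMeasurable f)
    have h2 := hG.comp_aestronglyMeasurable h1
    refine h2.congr ?_
    filter_upwards [hmemae] with s hs
    have h1' : (0:ℝ) ≤ T - s := by linarith [hs.2]
    have h2' : T - s ≤ T := by linarith [hs.1]
    simp only [max_eq_left h1', min_eq_left h2']
  -- uniform bound
  have h_bound : ∀ n, ∀ᵐ s ∂(volume.restrict (Ioo (0:ℝ) T)),
      ‖Sn n (T - s) (Bn n (f s))‖ ≤ C * (Cb * ‖f s‖) := by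
    intro n
    filter_upwards [hmemae] with s hs
    have h1' : (0:ℝ) ≤ T - s := by linarith [hs.2]
    have h2' : T - s ≤ T := by linarith [hs.1]
    calc ‖Sn n (T - s) (Bn n (f s))‖
        ≤ ‖Sn n (T - s)‖ * ‖Bn n (f s)‖ := (Sn n (T - s)).le_opNorm _
      _ ≤ C * (Cb * ‖f s‖) := by
          refine mul_le_mul (hSnbC n _ ⟨h1', h2'⟩) ?_ (norm_nonneg _) hCpos.le
          calc ‖Bn n (f s)‖ ≤ ‖Bn n‖ * ‖f s‖ := (Bn n).le_opNorm _
            _ ≤ Cb * ‖f s‖ := mul_le_mul_of_nonneg_right (hCb n) (norm_nonneg _)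
  -- pointwise convergence
  have h_lim : ∀ᵐ s ∂(volume.restrict (Ioo (0:ℝ) T)), Tendsto (fun n => Sn n (T - s) (Bn n (f s)))
      atTop (𝓝 (S (T - s) (B (f s)))) := by
    filter_upwards [hmemae] with s hs
    have ht0 : (0:ℝ) < T - s := by linarith [hs.2]
    have htT : T - s ≤ T := by linarith [hs.1]
    set v := (f : ℝ → U) s
    rw [tendsto_iff_norm_sub_tendsto_zero]
    have key : ∀ n, ‖Sn n (T - s) (Bn n v) - S (T - s) (B v)‖ ≤
        C * ‖Bn n v - B v‖ + ‖Sn n (T - s) (B v) - S (T - s) (B v)‖ := by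
      intro n
      calc ‖Sn n (T - s) (Bn n v) - S (T - s) (B v)‖
          = ‖Sn n (T - s) (Bn n v - B v) +
              (Sn n (T - s) (B v) - S (T - s) (B v))‖ := by
            rw [map_sub]; congr 1; abel
        _ ≤ ‖Sn n (T - s) (Bn n v - B v)‖ +
              ‖Sn n (T - s) (B v) - S (T - s) (B v)‖ := norm_add_le _ _
        _ ≤ _ := by
            gcongr
            calc ‖Sn n (T - s) (Bn n v - B v)‖
                ≤ ‖Sn n (T - s)‖ * ‖Bn n v - B v‖ := (Sn n (T - s)).le_opNorm _
              _ ≤ C * ‖Bn n v - B v‖ :=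
                  mul_le_mul_of_nonneg_right (hSnbC n _ ⟨ht0.le, htT⟩) (norm_nonneg _)
    refine squeeze_zero (fun n => norm_nonneg _) key ?_
    have h1' : Tendsto (fun n => C * ‖Bn n v - B v‖) atTop (𝓝 0) := by
      have := (tendsto_iff_norm_sub_tendsto_zero.mp (hBconv v)).const_mul C
      simpa using this
    have h2' : Tendsto (fun n => ‖Sn n (T - s) (B v) - S (T - s) (B v)‖)
        atTop (𝓝 0) := tendsto_iff_norm_sub_tendsto_zero.mp (hSconv _ ht0 (B v))
    simpa using h1'.add h2'
  have key := tendsto_integral_of_dominated_convergence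
    (fun s => C * (Cb * ‖f s‖)) F_meas hbound_int h_bound h_lim
  have hfinal : Tendsto (fun n => 𝓑Tn n f) atTop (𝓝 (𝓑T f)) := by
    rw [h𝓑T f]
    simp_rw [h𝓑Tn]
    exact key
  exact tendsto_iff_norm_sub_tendsto_zero.mp hfinal
end

section
/- Let (u_{0,n})_n be a sequence in H converging in norm to u₀ ∈ H, and let f, f_n ∈ L²((0,T),U). Denote by u and u_n the mild solutions with data (u₀, f) for (S, B) and (u_{0,n}, f_n) for (S_n, B_n), respectively. If f_n → f in the norm of L²((0,T),U), then u_n(t) → u(t) in H for every t ∈ (0,T], and u_n → u in L²((0,T),H). -/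
open MeasureTheory Set Filter
open scoped InnerProductSpace Topology ENNReal

lemma aux_jointCont {H : Type*} [NormedAddCommGroup H] [NormedSpace ℂ H]
    (S : ℝ → H →L[ℂ] H) (a : ℝ)
    (hScont : ∀ x : H, ContinuousOn (fun t => S t x) (Ici (0:ℝ)))
    (hSbound : ∀ t : ℝ, 0 ≤ t → ‖S t‖ ≤ Real.exp (-(t * a))) :
    Continuous (fun p : ℝ × H => S (max p.1 0) p.2) := by
  rw [continuous_iff_continuousAt]
  rintro ⟨r₀, x₀⟩
  have hb : ∀ r : ℝ, r ≤ |r₀| + 1 → ‖S (max r 0)‖ ≤ Real.exp (|a| * (|r₀| + 1)) := by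
    intro r hr
    refine (hSbound _ (le_max_right _ _)).trans (Real.exp_le_exp.2 ?_)
    have h1 : max r 0 ≤ |r₀| + 1 := max_le hr (by positivity)
    have h2 : 0 ≤ max r 0 := le_max_right _ _
    calc -(max r 0 * a) = max r 0 * (-a) := by ring
      _ ≤ max r 0 * |a| := mul_le_mul_of_nonneg_left (neg_le_abs a) h2
      _ ≤ (|r₀| + 1) * |a| := mul_le_mul_of_nonneg_right h1 (abs_nonneg a)
      _ = |a| * (|r₀| + 1) := mul_comm _ _
  have hcont1 : ContinuousAt (fun r : ℝ => S (max r 0) x₀) r₀ := by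
    have : Continuous fun r : ℝ => S (max r 0) x₀ :=
      (hScont x₀).comp_continuous (continuous_id.max continuous_const)
        fun r => mem_Ici.2 (le_max_right _ _)
    exact this.continuousAt
  have key : ∀ p : ℝ × H, S (max p.1 0) p.2 =
      S (max p.1 0) (p.2 - x₀) + S (max p.1 0) x₀ := by
    intro p; rw [map_sub, sub_add_cancel]
  unfold ContinuousAt
  simp only [key]
  have h0 : Tendsto (fun p : ℝ × H => S (max p.1 0) (p.2 - x₀)) (𝓝 (r₀, x₀)) (𝓝 0) := by
    apply squeeze_zero_norm'
      (a := fun p : ℝ × H => Real.exp (|a| * (|r₀| + 1)) * ‖p.2 - x₀‖)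
    · have hev : ∀ᶠ p : ℝ × H in 𝓝 (r₀, x₀), p.1 ≤ |r₀| + 1 := by
        have : Tendsto (fun p : ℝ × H => p.1) (𝓝 (r₀, x₀)) (𝓝 r₀) := continuous_fst.continuousAt
        exact this.eventually_le_const (by cases abs_cases r₀ <;> linarith)
      filter_upwards [hev] with p hp
      exact ((S (max p.1 0)).le_opNorm _).trans
        (mul_le_mul_of_nonneg_right (hb _ hp) (norm_nonneg _))
    · have : Tendsto (fun p : ℝ × H => ‖p.2 - x₀‖) (𝓝 (r₀, x₀)) (𝓝 ‖x₀ - x₀‖) :=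
        ((continuous_snd.sub continuous_const).norm).continuousAt
      simpa using (tendsto_const_nhds.mul this)
  have h1 : Tendsto (fun p : ℝ × H => S (max p.1 0) x₀) (𝓝 (r₀, x₀)) (𝓝 (S (max r₀ 0) x₀)) :=
    hcont1.tendsto.comp (continuous_fst.tendsto (r₀, x₀))
  simpa using h0.add h1

lemma aux_tendsto_apply {H H' : Type*} [NormedAddCommGroup H] [NormedSpace ℂ H]
    [NormedAddCommGroup H'] [NormedSpace ℂ H']
    {Tn : ℕ → H →L[ℂ] H'} {T : H →L[ℂ] H'} {C : ℝ} (hC : ∀ n, ‖Tn n‖ ≤ C)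
    (hconv : ∀ x, Tendsto (fun n => Tn n x) atTop (𝓝 (T x)))
    {xn : ℕ → H} {x : H} (hx : Tendsto xn atTop (𝓝 x)) :
    Tendsto (fun n => Tn n (xn n)) atTop (𝓝 (T x)) := by
  have key : ∀ n, Tn n (xn n) = Tn n (xn n - x) + Tn n x := by
    intro n; rw [map_sub, sub_add_cancel]
  simp only [key]
  have h0 : Tendsto (fun n => Tn n (xn n - x)) atTop (𝓝 0) := by
    apply squeeze_zero_norm (a := fun n => C * ‖xn n - x‖)
    · intro n
      exact ((Tn n).le_opNorm _).trans
        (mul_le_mul_of_nonneg_right (hC n) (norm_nonneg _))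
    · have : Tendsto (fun n => ‖xn n - x‖) atTop (𝓝 ‖x - x‖) :=
        ((hx.sub_const x).norm)
      simpa using tendsto_const_nhds.mul this
  simpa using h0.add (hconv x)

theorem mild_solutions_converge_strongly
    {H U : Type*}
    [NormedAddCommGroup H] [InnerProductSpace ℂ H] [CompleteSpace H]
    [NormedAddCommGroup U] [InnerProductSpace ℂ U] [CompleteSpace U]
    (a T : ℝ) (hT : 0 < T)
    (S : ℝ → H →L[ℂ] H) (Sn : ℕ → ℝ → H →L[ℂ] H)
    (hS0 : S 0 = 1)
    (hSsemi : ∀ t s : ℝ, 0 ≤ t → 0 ≤ s → S (t + s) = (S t).comp (S s))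
    (hScont : ∀ x : H, ContinuousOn (fun t => S t x) (Ici (0:ℝ)))
    (hSbound : ∀ t : ℝ, 0 ≤ t → ‖S t‖ ≤ Real.exp (-(t * a)))
    (hSn0 : ∀ n, Sn n 0 = 1)
    (hSnsemi : ∀ n, ∀ t s : ℝ, 0 ≤ t → 0 ≤ s →
      Sn n (t + s) = (Sn n t).comp (Sn n s))
    (hSncont : ∀ n, ∀ x : H, ContinuousOn (fun t => Sn n t x) (Ici (0:ℝ)))
    (hSnbound : ∀ n, ∀ t : ℝ, 0 ≤ t → ‖Sn n t‖ ≤ Real.exp (-(t * a)))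
    (hSconv : ∀ t : ℝ, 0 < t → ∀ x : H,
      Tendsto (fun n => Sn n t x) atTop (nhds (S t x)))
    (B : U →L[ℂ] H) (Bn : ℕ → U →L[ℂ] H)
    (hBconv : ∀ v : U, Tendsto (fun n => Bn n v) atTop (nhds (B v)))
    (hBadjconv : ∀ x : H,
      Tendsto (fun n => ContinuousLinearMap.adjoint (Bn n) x) atTop
        (nhds (ContinuousLinearMap.adjoint B x)))
    (u₀ : H) (u0n : ℕ → H)
    (hu0conv : Tendsto (fun n => u0n n) atTop (nhds u₀))
    (f : Lp U 2 (volume.restrict (Ioo (0:ℝ) T)))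
    (fn : ℕ → Lp U 2 (volume.restrict (Ioo (0:ℝ) T)))
    (u : ℝ → H) (un : ℕ → ℝ → H)
    (hu : ∀ t ∈ Icc (0:ℝ) T,
      u t = S t u₀ + ∫ s in Ioo (0:ℝ) t, S (t - s) (B (f s)))
    (hun : ∀ n, ∀ t ∈ Icc (0:ℝ) T,
      un n t = Sn n t (u0n n) + ∫ s in Ioo (0:ℝ) t, Sn n (t - s) (Bn n (fn n s)))
    (hfconv : Tendsto (fun n => fn n) atTop (nhds f)) :
    (∀ t ∈ Ioc (0:ℝ) T, Tendsto (fun n => un n t) atTop (nhds (u t))) ∧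
    Tendsto (fun n => ∫ t in Ioo (0:ℝ) T, ‖un n t - u t‖ ^ 2) atTop (nhds 0) := by
  -- uniform bound on the Bn
  obtain ⟨M₀, hM₀⟩ : ∃ M₀, ∀ n, ‖Bn n‖ ≤ M₀ :=
    banach_steinhaus fun v => by
      obtain ⟨c, hc⟩ := (hBconv v).norm.bddAbove_range
      exact ⟨c, fun n => hc ⟨n, rfl⟩⟩
  set M : ℝ := max M₀ ‖B‖ with hMdef
  have hM : ∀ n, ‖Bn n‖ ≤ M := fun n => (hM₀ n).trans (le_max_left _ _)
  have hMB : ‖B‖ ≤ M := le_max_right _ _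
  have hM0 : 0 ≤ M := (norm_nonneg B).trans hMB
  -- uniform bound on the semigroups
  set C : ℝ := Real.exp (|a| * T) with hCdef
  have hC0 : 0 ≤ C := Real.exp_nonneg _
  have hC : ∀ r : ℝ, 0 ≤ r → r ≤ T → Real.exp (-(r * a)) ≤ C := by
    intro r h1 h2
    apply Real.exp_le_exp.2
    calc -(r * a) = r * (-a) := by ring
      _ ≤ r * |a| := mul_le_mul_of_nonneg_left (neg_le_abs a) h1
      _ ≤ T * |a| := mul_le_mul_of_nonneg_right h2 (abs_nonneg a)
      _ = |a| * T := mul_comm _ _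
  -- restriction of (volume.restrict (Ioo (0:ℝ) T)) to smaller intervals
  have hres : ∀ t : ℝ, t ≤ T → (volume.restrict (Ioo (0:ℝ) T)).restrict (Ioo (0:ℝ) t) = volume.restrict (Ioo (0:ℝ) t) := by
    intro t htT
    rw [Measure.restrict_restrict measurableSet_Ioo,
      Set.inter_eq_left.mpr (Ioo_subset_Ioo le_rfl htT)]
  -- integrability of Lp elements on subintervals
  have hfInt : ∀ (g : Lp U 2 (volume.restrict (Ioo (0:ℝ) T))) (t : ℝ), t ≤ T → Integrable (⇑g) (volume.restrict (Ioo (0:ℝ) t)) := by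
    intro g t htT
    rw [← hres t htT]
    exact ((Lp.memLp g).integrable one_le_two).integrableOn
  -- generic integrability of the convolution integrand
  have genInt : ∀ (S' : ℝ → H →L[ℂ] H), (∀ x : H, ContinuousOn (fun r => S' r x) (Ici (0:ℝ))) →
      (∀ r : ℝ, 0 ≤ r → ‖S' r‖ ≤ Real.exp (-(r * a))) →
      ∀ t : ℝ, t ≤ T → ∀ h : ℝ → H,
      Integrable h (volume.restrict (Ioo (0:ℝ) t)) →
      Integrable (fun s => S' (t - s) (h s)) (volume.restrict (Ioo (0:ℝ) t)) := by
    intro S' hc hb t htT h hint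
    have jc := aux_jointCont S' a hc hb
    have hmes : AEStronglyMeasurable (fun s => S' (t - s) (h s))
        (volume.restrict (Ioo (0:ℝ) t)) := by
      have h1 : AEStronglyMeasurable (fun s : ℝ => ((t - s : ℝ), h s))
          (volume.restrict (Ioo (0:ℝ) t)) :=
        ((continuous_const.sub continuous_id).aestronglyMeasurable).prodMk hint.1
      refine (jc.comp_aestronglyMeasurable h1).congr ?_
      filter_upwards [ae_restrict_mem measurableSet_Ioo] with s hs
      simp only [max_eq_left (by linarith [hs.2] : (0:ℝ) ≤ t - s)]
    refine Integrable.mono' (hint.norm.const_mul C) hmes ?_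
    filter_upwards [ae_restrict_mem measurableSet_Ioo] with s hs
    exact ((S' (t - s)).le_opNorm _).trans
      (mul_le_mul_of_nonneg_right
        ((hb _ (by linarith [hs.2])).trans (hC _ (by linarith [hs.2]) (by linarith [hs.1])))
        (norm_nonneg _))
  -- L¹ convergence of fn to f
  have hL1 : Tendsto (fun n => ∫ s in Ioo (0:ℝ) T, ‖fn n s - f s‖) atTop (𝓝 0) := by
    have h2 : Tendsto (fun n => eLpNorm (⇑(fn n) - ⇑f) 2 (volume.restrict (Ioo (0:ℝ) T))) atTop (𝓝 0) :=
      (Lp.tendsto_Lp_iff_tendsto_eLpNorm' fn f).mp hfconv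
    set κ : ℝ≥0∞ := (volume.restrict (Ioo (0:ℝ) T)) Set.univ ^ (1 / (1:ℝ≥0∞).toReal - 1 / (2:ℝ≥0∞).toReal) with hκdef
    have hκtop : κ ≠ ⊤ := by
      rw [hκdef]
      exact (ENNReal.rpow_lt_top_of_nonneg (by norm_num) (measure_ne_top (volume.restrict (Ioo (0:ℝ) T)) _)).ne
    have h1 : Tendsto (fun n => eLpNorm (⇑(fn n) - ⇑f) 1 (volume.restrict (Ioo (0:ℝ) T))) atTop (𝓝 0) := by
      have hb : ∀ n, eLpNorm (⇑(fn n) - ⇑f) 1 (volume.restrict (Ioo (0:ℝ) T)) ≤ eLpNorm (⇑(fn n) - ⇑f) 2 (volume.restrict (Ioo (0:ℝ) T)) * κ := fun n =>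
        eLpNorm_le_eLpNorm_mul_rpow_measure_univ (by norm_num)
          ((Lp.aestronglyMeasurable (fn n)).sub (Lp.aestronglyMeasurable f))
      have hmul : Tendsto (fun n => eLpNorm (⇑(fn n) - ⇑f) 2 (volume.restrict (Ioo (0:ℝ) T)) * κ) atTop (𝓝 0) := by
        have := ENNReal.Tendsto.mul_const h2 (Or.inr hκtop)
        simpa using this
      exact tendsto_of_tendsto_of_tendsto_of_le_of_le tendsto_const_nhds hmul
        (fun n => zero_le) hb
    have heq : ∀ n, ∫ s in Ioo (0:ℝ) T, ‖fn n s - f s‖ =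
        (eLpNorm (⇑(fn n) - ⇑f) 1 (volume.restrict (Ioo (0:ℝ) T))).toReal := by
      intro n
      rw [eLpNorm_one_eq_lintegral_enorm,
        ← integral_norm_eq_lintegral_enorm
          ((Lp.aestronglyMeasurable (fn n)).sub (Lp.aestronglyMeasurable f))]
      rfl
    simp only [heq]
    have := (ENNReal.tendsto_toReal ENNReal.zero_ne_top).comp h1
    simpa [Function.comp_def] using this
  -- the norm integral of f
  set IF : ℝ := ∫ s in Ioo (0:ℝ) T, ‖f s‖ with hIFdef
  ---------------------------------------------------------------------------
  -- Part 1 : pointwise convergence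
  ---------------------------------------------------------------------------
  have part1 : ∀ t ∈ Ioc (0:ℝ) T, Tendsto (fun n => un n t) atTop (𝓝 (u t)) := by
    rintro t ⟨ht, htT⟩
    have htIcc : t ∈ Icc (0:ℝ) T := ⟨ht.le, htT⟩
    have hfI : Integrable (⇑f) (volume.restrict (Ioo (0:ℝ) t)) := hfInt f t htT
    have hfnI : ∀ n, Integrable (⇑(fn n)) (volume.restrict (Ioo (0:ℝ) t)) :=
      fun n => hfInt (fn n) t htT
    have hIBnf : ∀ n, Integrable (fun s => Sn n (t - s) (Bn n (f s)))
        (volume.restrict (Ioo (0:ℝ) t)) :=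
      fun n => genInt (Sn n) (hSncont n) (hSnbound n) t htT _ ((Bn n).integrable_comp hfI)
    have hIBnd : ∀ n, Integrable (fun s => Sn n (t - s) (Bn n (fn n s - f s)))
        (volume.restrict (Ioo (0:ℝ) t)) :=
      fun n => genInt (Sn n) (hSncont n) (hSnbound n) t htT _
        ((Bn n).integrable_comp ((hfnI n).sub hfI))
    -- first term
    have hT1 : Tendsto (fun n => Sn n t (u0n n)) atTop (𝓝 (S t u₀)) :=
      aux_tendsto_apply (fun n => hSnbound n t ht.le) (hSconv t ht) hu0conv
    -- second term, part (a)
    have hT2a : Tendsto (fun n => ∫ s in Ioo (0:ℝ) t, Sn n (t - s) (Bn n (fn n s - f s)))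
        atTop (𝓝 0) := by
      apply squeeze_zero_norm (a := fun n => (C * M) * ∫ s in Ioo (0:ℝ) T, ‖fn n s - f s‖)
      · intro n
        have hId : Integrable (fun s => ‖fn n s - f s‖) (volume.restrict (Ioo (0:ℝ) T)) :=
          (((hfInt (fn n) T le_rfl).sub (hfInt f T le_rfl)).norm)
        calc ‖∫ s in Ioo (0:ℝ) t, Sn n (t - s) (Bn n (fn n s - f s))‖
            ≤ ∫ s in Ioo (0:ℝ) t, ‖Sn n (t - s) (Bn n (fn n s - f s))‖ :=
              norm_integral_le_integral_norm _
          _ ≤ ∫ s in Ioo (0:ℝ) t, (C * M) * ‖fn n s - f s‖ := by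
              apply integral_mono_ae (hIBnd n).norm
                ((((hfnI n).sub hfI).norm).const_mul (C * M))
              filter_upwards [ae_restrict_mem measurableSet_Ioo] with s hs
              calc ‖Sn n (t - s) (Bn n (fn n s - f s))‖
                  ≤ ‖Sn n (t - s)‖ * ‖Bn n (fn n s - f s)‖ := (Sn n (t - s)).le_opNorm _
                _ ≤ C * (M * ‖fn n s - f s‖) := by
                    apply mul_le_mul
                    · exact (hSnbound n _ (by linarith [hs.2])).trans
                        (hC _ (by linarith [hs.2]) (by linarith [hs.1]))
                    · exact ((Bn n).le_opNorm _).trans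
                        (mul_le_mul_of_nonneg_right (hM n) (norm_nonneg _))
                    · exact norm_nonneg _
                    · exact hC0
                _ = (C * M) * ‖fn n s - f s‖ := by ring
          _ = (C * M) * ∫ s in Ioo (0:ℝ) t, ‖fn n s - f s‖ := integral_const_mul _ _
          _ ≤ (C * M) * ∫ s in Ioo (0:ℝ) T, ‖fn n s - f s‖ := by
              apply mul_le_mul_of_nonneg_left _ (by positivity)
              apply setIntegral_mono_set hId
                (Eventually.of_forall fun s => norm_nonneg _)
                (HasSubset.Subset.eventuallyLE (Ioo_subset_Ioo le_rfl htT))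
      · simpa using hL1.const_mul (C * M)
    -- second term, part (b) : dominated convergence
    have hT2b : Tendsto (fun n => ∫ s in Ioo (0:ℝ) t, Sn n (t - s) (Bn n (f s))) atTop
        (𝓝 (∫ s in Ioo (0:ℝ) t, S (t - s) (B (f s)))) := by
      apply tendsto_integral_of_dominated_convergence (bound := fun s => C * (M * ‖f s‖))
      · exact fun n => (hIBnf n).1
      · exact (hfI.norm.const_mul M).const_mul C
      · intro n
        filter_upwards [ae_restrict_mem measurableSet_Ioo] with s hs
        calc ‖Sn n (t - s) (Bn n (f s))‖
            ≤ ‖Sn n (t - s)‖ * ‖Bn n (f s)‖ := (Sn n (t - s)).le_opNorm _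
          _ ≤ C * (M * ‖f s‖) := by
              apply mul_le_mul
              · exact (hSnbound n _ (by linarith [hs.2])).trans
                  (hC _ (by linarith [hs.2]) (by linarith [hs.1]))
              · exact ((Bn n).le_opNorm _).trans
                  (mul_le_mul_of_nonneg_right (hM n) (norm_nonneg _))
              · exact norm_nonneg _
              · exact hC0
      · filter_upwards [ae_restrict_mem measurableSet_Ioo] with s hs
        exact aux_tendsto_apply
          (fun n => (hSnbound n _ (by linarith [hs.2])).trans
            (hC _ (by linarith [hs.2]) (by linarith [hs.1])))
          (hSconv (t - s) (by linarith [hs.2])) (hBconv (f s))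
    -- combine the two integral pieces
    have h2 : Tendsto (fun n => ∫ s in Ioo (0:ℝ) t, Sn n (t - s) (Bn n (fn n s))) atTop
        (𝓝 (∫ s in Ioo (0:ℝ) t, S (t - s) (B (f s)))) := by
      have hsplit : ∀ n, ∫ s in Ioo (0:ℝ) t, Sn n (t - s) (Bn n (fn n s)) =
          (∫ s in Ioo (0:ℝ) t, Sn n (t - s) (Bn n (fn n s - f s))) +
          ∫ s in Ioo (0:ℝ) t, Sn n (t - s) (Bn n (f s)) := by
        intro n
        rw [← integral_add (hIBnd n) (hIBnf n)]
        apply integral_congr_ae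
        apply Eventually.of_forall
        intro s
        simp only [map_sub]
        rw [sub_add_cancel]
      simp only [hsplit]
      simpa using hT2a.add hT2b
    have hfinal := hT1.add h2
    rw [hu t htIcc]
    exact hfinal.congr fun n => (hun n t htIcc).symm
  refine ⟨part1, ?_⟩
  ---------------------------------------------------------------------------
  -- Part 2 : L² convergence
  ---------------------------------------------------------------------------
  -- uniform bounds
  obtain ⟨R₀, hR₀⟩ : ∃ R₀, ∀ n, ‖u0n n‖ ≤ R₀ := by
    obtain ⟨c, hc⟩ := hu0conv.norm.bddAbove_range
    exact ⟨c, fun n => hc ⟨n, rfl⟩⟩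
  obtain ⟨R₂, hR₂⟩ : ∃ R₂, ∀ n, (∫ s in Ioo (0:ℝ) T, ‖fn n s - f s‖) ≤ R₂ := by
    obtain ⟨c, hc⟩ := hL1.bddAbove_range
    exact ⟨c, fun n => hc ⟨n, rfl⟩⟩
  have hfIT : Integrable (⇑f) (volume.restrict (Ioo (0:ℝ) T)) := hfInt f T le_rfl
  have hR₁ : ∀ n, (∫ s in Ioo (0:ℝ) T, ‖fn n s‖) ≤ R₂ + IF := by
    intro n
    have hd : Integrable (fun s => ‖fn n s - f s‖) (volume.restrict (Ioo (0:ℝ) T)) :=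
      (((hfInt (fn n) T le_rfl).sub hfIT).norm)
    have hfn' : Integrable (fun s => ‖f s‖) (volume.restrict (Ioo (0:ℝ) T)) := hfIT.norm
    have h1 : Integrable (fun s => ‖fn n s - f s‖ + ‖f s‖) (volume.restrict (Ioo (0:ℝ) T)) :=
      hd.add hfn'
    calc (∫ s in Ioo (0:ℝ) T, ‖fn n s‖)
        ≤ ∫ s in Ioo (0:ℝ) T, (‖fn n s - f s‖ + ‖f s‖) := by
          apply integral_mono_ae (hfInt (fn n) T le_rfl).norm h1
          apply Eventually.of_forall
          intro s
          simpa using norm_sub_le_norm_sub_add_norm_sub (fn n s) (f s) 0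
      _ = (∫ s in Ioo (0:ℝ) T, ‖fn n s - f s‖) + IF := by
          rw [integral_add hd hfn']
      _ ≤ R₂ + IF := by linarith [hR₂ n]
  set K : ℝ := (C * R₀ + C * M * (R₂ + IF)) + (C * ‖u₀‖ + C * M * IF) with hKdef
  -- uniform bound on ‖un n t - u t‖
  have hbnd : ∀ n, ∀ t ∈ Ioc (0:ℝ) T, ‖un n t - u t‖ ≤ K := by
    intro n t htm
    obtain ⟨ht, htT⟩ := htm
    have htIcc : t ∈ Icc (0:ℝ) T := ⟨ht.le, htT⟩
    have hgen : ∀ (S' : ℝ → H →L[ℂ] H), (∀ x : H, ContinuousOn (fun r => S' r x) (Ici (0:ℝ))) →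
        (∀ r : ℝ, 0 ≤ r → ‖S' r‖ ≤ Real.exp (-(r * a))) →
        ∀ (L : U →L[ℂ] H), ‖L‖ ≤ M → ∀ (g : Lp U 2 (volume.restrict (Ioo (0:ℝ) T))),
        ‖∫ s in Ioo (0:ℝ) t, S' (t - s) (L (g s))‖ ≤
          C * M * ∫ s in Ioo (0:ℝ) T, ‖g s‖ := by
      intro S' hc hb L hL g
      have hgI : Integrable (⇑g) (volume.restrict (Ioo (0:ℝ) t)) := hfInt g t htT
      have hint := genInt S' hc hb t htT _ (L.integrable_comp hgI)
      calc ‖∫ s in Ioo (0:ℝ) t, S' (t - s) (L (g s))‖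
          ≤ ∫ s in Ioo (0:ℝ) t, ‖S' (t - s) (L (g s))‖ := norm_integral_le_integral_norm _
        _ ≤ ∫ s in Ioo (0:ℝ) t, (C * M) * ‖g s‖ := by
            apply integral_mono_ae hint.norm (hgI.norm.const_mul (C * M))
            filter_upwards [ae_restrict_mem measurableSet_Ioo] with s hs
            calc ‖S' (t - s) (L (g s))‖ ≤ ‖S' (t - s)‖ * ‖L (g s)‖ := (S' (t - s)).le_opNorm _
              _ ≤ C * (M * ‖g s‖) := by
                  apply mul_le_mul
                  · exact (hb _ (by linarith [hs.2])).trans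
                      (hC _ (by linarith [hs.2]) (by linarith [hs.1]))
                  · exact (L.le_opNorm _).trans
                      (mul_le_mul_of_nonneg_right hL (norm_nonneg _))
                  · exact norm_nonneg _
                  · exact hC0
              _ = (C * M) * ‖g s‖ := by ring
        _ = (C * M) * ∫ s in Ioo (0:ℝ) t, ‖g s‖ := integral_const_mul _ _
        _ ≤ C * M * ∫ s in Ioo (0:ℝ) T, ‖g s‖ := by
            apply mul_le_mul_of_nonneg_left _ (by positivity)
            exact setIntegral_mono_set (hfInt g T le_rfl).norm
              (Eventually.of_forall fun s => norm_nonneg _)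
              (HasSubset.Subset.eventuallyLE (Ioo_subset_Ioo le_rfl htT))
    have hun1 : ‖un n t‖ ≤ C * R₀ + C * M * (R₂ + IF) := by
      rw [hun n t htIcc]
      refine (norm_add_le _ _).trans (add_le_add ?_ ?_)
      · calc ‖Sn n t (u0n n)‖ ≤ ‖Sn n t‖ * ‖u0n n‖ := (Sn n t).le_opNorm _
          _ ≤ C * R₀ := mul_le_mul ((hSnbound n t ht.le).trans (hC t ht.le htT)) (hR₀ n)
              (norm_nonneg _) hC0
      · exact (hgen (Sn n) (hSncont n) (hSnbound n) (Bn n) (hM n) (fn n)).trans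
          (mul_le_mul_of_nonneg_left (hR₁ n) (by positivity))
    have hu1 : ‖u t‖ ≤ C * ‖u₀‖ + C * M * IF := by
      rw [hu t htIcc]
      refine (norm_add_le _ _).trans (add_le_add ?_ ?_)
      · calc ‖S t u₀‖ ≤ ‖S t‖ * ‖u₀‖ := (S t).le_opNorm _
          _ ≤ C * ‖u₀‖ := mul_le_mul_of_nonneg_right ((hSbound t ht.le).trans (hC t ht.le htT))
              (norm_nonneg _)
      · exact hgen S hScont hSbound B hMB f
    calc ‖un n t - u t‖ ≤ ‖un n t‖ + ‖u t‖ := norm_sub_le _ _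
      _ ≤ K := by rw [hKdef]; exact add_le_add hun1 hu1
  -- measurability
  have vmeasAux : ∀ (S' : ℝ → H →L[ℂ] H), (∀ x : H, ContinuousOn (fun r => S' r x) (Ici (0:ℝ))) →
      (∀ r : ℝ, 0 ≤ r → ‖S' r‖ ≤ Real.exp (-(r * a))) →
      ∀ h : ℝ → H, AEStronglyMeasurable h (volume.restrict (Ioo (0:ℝ) T)) →
      AEStronglyMeasurable (fun t => ∫ s in Ioo (0:ℝ) t, S' (t - s) (h s)) (volume.restrict (Ioo (0:ℝ) T)) := by
    intro S' hc hb h hh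
    obtain ⟨g, hg, hhg⟩ := hh
    have jc := aux_jointCont S' a hc hb
    set Φ : ℝ × ℝ → H := fun q =>
      Set.indicator {q : ℝ × ℝ | q.2 < q.1} (fun q => S' (max (q.1 - q.2) 0) (g q.2)) q with hΦdef
    have hΦm : StronglyMeasurable Φ := by
      apply StronglyMeasurable.indicator
      · exact jc.comp_stronglyMeasurable
          (((measurable_fst.sub measurable_snd).stronglyMeasurable).prodMk
            (hg.comp_measurable measurable_snd))
      · exact measurableSet_lt measurable_snd measurable_fst
    have hW : StronglyMeasurable (fun t => ∫ s, Φ (t, s) ∂(volume.restrict (Ioo (0:ℝ) T))) := hΦm.integral_prod_right'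
    refine hW.aestronglyMeasurable.congr ?_
    filter_upwards [ae_restrict_mem measurableSet_Ioo] with t ht
    have hinter : Ioo (0:ℝ) T ∩ Iio t = Ioo (0:ℝ) t := by
      ext s
      simp only [mem_inter_iff, mem_Ioo, mem_Iio]
      constructor
      · rintro ⟨⟨h1, _⟩, h3⟩; exact ⟨h1, h3⟩
      · rintro ⟨h1, h2⟩; exact ⟨⟨h1, h2.trans ht.2⟩, h2⟩
    calc ∫ s, Φ (t, s) ∂(volume.restrict (Ioo (0:ℝ) T))
        = ∫ s in Ioo (0:ℝ) T, Set.indicator (Iio t) (fun s => S' (max (t - s) 0) (g s)) s := by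
          apply integral_congr_ae
          apply Eventually.of_forall
          intro s
          by_cases hst : s < t <;>
            simp [hΦdef, Set.indicator_apply, hst]
      _ = ∫ s in Ioo (0:ℝ) T ∩ Iio t, S' (max (t - s) 0) (g s) :=
          setIntegral_indicator measurableSet_Iio
      _ = ∫ s in Ioo (0:ℝ) t, S' (max (t - s) 0) (g s) := by rw [hinter]
      _ = ∫ s in Ioo (0:ℝ) t, S' (t - s) (h s) := by
          apply integral_congr_ae
          have hhg' : h =ᵐ[volume.restrict (Ioo (0:ℝ) t)] g := by
            rw [← hres t ht.2.le]
            exact ae_restrict_of_ae hhg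
          filter_upwards [ae_restrict_mem measurableSet_Ioo, hhg'] with s hs hgs
          rw [max_eq_left (by linarith [hs.2] : (0:ℝ) ≤ t - s), hgs]
  have hfm : AEStronglyMeasurable (fun s => B (f s)) (volume.restrict (Ioo (0:ℝ) T)) :=
    B.continuous.comp_aestronglyMeasurable (Lp.aestronglyMeasurable f)
  have hfnm : ∀ n, AEStronglyMeasurable (fun s => Bn n (fn n s)) (volume.restrict (Ioo (0:ℝ) T)) :=
    fun n => (Bn n).continuous.comp_aestronglyMeasurable (Lp.aestronglyMeasurable (fn n))
  have humeas : AEStronglyMeasurable u (volume.restrict (Ioo (0:ℝ) T)) := by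
    have h1 : AEStronglyMeasurable
        (fun t => S (max t 0) u₀ + ∫ s in Ioo (0:ℝ) t, S (t - s) (B (f s))) (volume.restrict (Ioo (0:ℝ) T)) := by
      apply AEStronglyMeasurable.add
      · exact ((aux_jointCont S a hScont hSbound).comp
          (continuous_id.prodMk continuous_const)).aestronglyMeasurable
      · exact vmeasAux S hScont hSbound _ hfm
    refine h1.congr ?_
    filter_upwards [ae_restrict_mem measurableSet_Ioo] with t ht
    rw [max_eq_left ht.1.le, ← hu t ⟨ht.1.le, ht.2.le⟩]
  have hunmeas : ∀ n, AEStronglyMeasurable (un n) (volume.restrict (Ioo (0:ℝ) T)) := by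
    intro n
    have h1 : AEStronglyMeasurable
        (fun t => Sn n (max t 0) (u0n n) + ∫ s in Ioo (0:ℝ) t, Sn n (t - s) (Bn n (fn n s))) (volume.restrict (Ioo (0:ℝ) T)) := by
      apply AEStronglyMeasurable.add
      · exact ((aux_jointCont (Sn n) a (hSncont n) (hSnbound n)).comp
          (continuous_id.prodMk continuous_const)).aestronglyMeasurable
      · exact vmeasAux (Sn n) (hSncont n) (hSnbound n) _ (hfnm n)
    refine h1.congr ?_
    filter_upwards [ae_restrict_mem measurableSet_Ioo] with t ht
    rw [max_eq_left ht.1.le, ← hun n t ⟨ht.1.le, ht.2.le⟩]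
  -- dominated convergence in t
  have hmain := tendsto_integral_of_dominated_convergence (μ := volume.restrict (Ioo (0:ℝ) T))
    (F := fun n t => ‖un n t - u t‖ ^ 2) (f := fun _ => (0:ℝ)) (bound := fun _ => K ^ 2)
    (fun n => (continuous_pow 2).comp_aestronglyMeasurable
      (((hunmeas n).sub humeas).norm))
    (integrable_const _)
    (by
      intro n
      filter_upwards [ae_restrict_mem measurableSet_Ioo] with t ht
      rw [Real.norm_eq_abs, abs_of_nonneg (by positivity)]
      exact pow_le_pow_left₀ (norm_nonneg _) (hbnd n t ⟨ht.1, ht.2.le⟩) 2)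
    (by
      filter_upwards [ae_restrict_mem measurableSet_Ioo] with t ht
      have h0 : Tendsto (fun n => un n t - u t) atTop (𝓝 (u t - u t)) :=
        (part1 t ⟨ht.1, ht.2.le⟩).sub tendsto_const_nhds
      have h1 := (h0.norm).pow 2
      simpa using h1)
  simpa using hmain
end

section
/- Let H₁, H₂, H₃ be Hilbert spaces and X : H₁ → H₃, Y : H₂ → H₃ bounded linear operators. Then the following are equivalent: (a) Ran X ⊆ Ran Y; (b) there is c > 0 such that ‖X* z‖ ≤ c ‖Y* z‖ for all z ∈ H₃; (c) there is a bounded linear operator Z : H₁ → H₂ with X = Y ∘ Z. -/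
open Set
open scoped InnerProductSpace

section helpers
variable {H₁ H₂ H₃ : Type*}
    [NormedAddCommGroup H₁] [InnerProductSpace ℂ H₁] [CompleteSpace H₁]
    [NormedAddCommGroup H₂] [InnerProductSpace ℂ H₂] [CompleteSpace H₂]
    [NormedAddCommGroup H₃] [InnerProductSpace ℂ H₃] [CompleteSpace H₃]

/-- (a) → (c) via closed graph theorem. -/
theorem douglas_aToC (X : H₁ →L[ℂ] H₃) (Y : H₂ →L[ℂ] H₃)
    (h : Set.range X ⊆ Set.range Y) : ∃ Z : H₁ →L[ℂ] H₂, X = Y.comp Z := by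
  classical
  set K : Submodule ℂ H₂ := (Y.ker)ᗮ with hKdef
  have hkerclosed : IsClosed ((Y.ker : Submodule ℂ H₂) : Set H₂) :=
    ContinuousLinearMap.isClosed_ker Y
  haveI : CompleteSpace (Y.ker : Submodule ℂ H₂) := hkerclosed.completeSpace_coe
  -- uniqueness of preimages in K
  have huniq : ∀ (k k' : K), Y k = Y k' → k = k' := by
    intro k k' hkk
    have hmem : (k : H₂) - k' ∈ Y.ker := by
      simp [LinearMap.mem_ker, map_sub, hkk]
    have hmem' : (k : H₂) - k' ∈ K := K.sub_mem k.2 k'.2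
    have hz : (k : H₂) - k' = 0 := by
      have := (Submodule.orthogonal_disjoint (Y.ker)).le_bot
        (Submodule.mem_inf.mpr ⟨hmem, hmem'⟩)
      simpa using this
    exact Subtype.ext (sub_eq_zero.mp hz)
  -- existence of preimage in K
  have hex : ∀ x : H₁, ∃ k : K, Y k = X x := by
    intro x
    obtain ⟨w, hw⟩ := h ⟨x, rfl⟩
    refine ⟨⟨w - (Submodule.orthogonalProjectionOnto (Y.ker) w : H₂), ?_⟩, ?_⟩
    · exact Submodule.sub_starProjection_mem_orthogonal (K := Y.ker) w
    · have hm : ((Submodule.orthogonalProjectionOnto (Y.ker) w : H₂)) ∈ Y.ker :=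
        (Submodule.orthogonalProjectionOnto (Y.ker) w).2
      simp only [map_sub]
      rw [show Y (Submodule.orthogonalProjectionOnto (Y.ker) w : H₂) = 0 from LinearMap.mem_ker.mp hm]
      simpa using hw
  choose z hz using hex
  have hZadd : ∀ x x', z (x + x') = z x + z x' := by
    intro x x'
    refine huniq _ _ ?_
    simp [hz, Submodule.coe_add, map_add]
  have hZsmul : ∀ (a : ℂ) x, z (a • x) = a • z x := by
    intro a x
    refine huniq _ _ ?_
    simp [hz, map_smul]
  let Z₀ : H₁ →ₗ[ℂ] K := { toFun := z, map_add' := hZadd, map_smul' := hZsmul }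
  have hgraph : IsClosed (Z₀.graph : Set (H₁ × K)) := by
    have : (Z₀.graph : Set (H₁ × K)) = {p : H₁ × K | Y p.2 = X p.1} := by
      ext p
      constructor
      · intro hp
        have h2 : p.2 = Z₀ p.1 := (LinearMap.mem_graph_iff Z₀ p).mp hp
        simp only [Set.mem_setOf_eq, h2]
        exact hz p.1
      · intro hp
        exact (LinearMap.mem_graph_iff Z₀ p).mpr (huniq _ _ (by show Y (z p.1 : H₂) = Y (p.2 : H₂); rw [hz p.1]; exact hp.symm)).symm
    rw [this]
    exact isClosed_eq (Y.continuous.comp (continuous_subtype_val.comp continuous_snd))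
      (X.continuous.comp continuous_fst)
  have hcont : Continuous Z₀ := Z₀.continuous_of_isClosed_graph hgraph
  refine ⟨K.subtypeL.comp ⟨Z₀, hcont⟩, ?_⟩
  ext x
  simpa [Z₀] using (hz x).symm

/-- (b) → (a) via Hahn–Banach and Riesz representation. -/
theorem douglas_bToA (X : H₁ →L[ℂ] H₃) (Y : H₂ →L[ℂ] H₃) (c : ℝ)
    (hc : ∀ z : H₃, ‖ContinuousLinearMap.adjoint X z‖ ≤ c * ‖ContinuousLinearMap.adjoint Y z‖) :
    Set.range X ⊆ Set.range Y := by
  rintro _ ⟨x₀, rfl⟩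
  set u := X x₀ with hu
  set T : H₃ →ₗ[ℂ] H₂ := (ContinuousLinearMap.adjoint Y : H₃ →L[ℂ] H₂).toLinearMap with hT
  set g : H₃ →ₗ[ℂ] ℂ := (innerSL ℂ u : H₃ →L[ℂ] ℂ).toLinearMap with hg
  have hgval : ∀ z : H₃, g z = ⟪x₀, ContinuousLinearMap.adjoint X z⟫_ℂ := by
    intro z
    simp [hg, hu, innerSL_apply_apply, ContinuousLinearMap.adjoint_inner_right]
  have hker : LinearMap.ker T ≤ LinearMap.ker g := by
    intro z hzk
    have hz0 : ContinuousLinearMap.adjoint Y z = 0 := hzk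
    have hx0 : ‖ContinuousLinearMap.adjoint X z‖ ≤ 0 := by simpa [hz0] using hc z
    have hx0' : ContinuousLinearMap.adjoint X z = 0 :=
      norm_le_zero_iff.mp hx0
    simp [LinearMap.mem_ker, hgval, hx0']
  let f₀ : (H₃ ⧸ LinearMap.ker T) →ₗ[ℂ] ℂ := (LinearMap.ker T).liftQ g hker
  let e : (H₃ ⧸ LinearMap.ker T) ≃ₗ[ℂ] LinearMap.range T := T.quotKerEquivRange
  let f : (LinearMap.range T) →ₗ[ℂ] ℂ := f₀.comp (e.symm : LinearMap.range T →ₗ[ℂ] _)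
  have hfval : ∀ (z : H₃), f ⟨T z, LinearMap.mem_range_self T z⟩ = g z := by
    intro z
    have he : e (Submodule.Quotient.mk z) = ⟨T z, LinearMap.mem_range_self T z⟩ :=
      Subtype.ext (T.quotKerEquivRange_apply_mk z)
    have : e.symm ⟨T z, LinearMap.mem_range_self T z⟩ = Submodule.Quotient.mk z := by
      rw [LinearEquiv.symm_apply_eq, he]
    simp only [f, LinearMap.comp_apply, LinearEquiv.coe_coe, this]
    exact Submodule.liftQ_apply (LinearMap.ker T) g (h := hker) z
  have hbound : ∀ s : LinearMap.range T, ‖f s‖ ≤ (c * ‖x₀‖) * ‖s‖ := by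
    rintro ⟨s, hs⟩
    obtain ⟨z, rfl⟩ := hs
    rw [show (⟨T z, ⟨z, rfl⟩⟩ : LinearMap.range T) = ⟨T z, LinearMap.mem_range_self T z⟩ from rfl,
      hfval z, hgval z]
    calc ‖⟪x₀, ContinuousLinearMap.adjoint X z⟫_ℂ‖
        ≤ ‖x₀‖ * ‖ContinuousLinearMap.adjoint X z‖ := norm_inner_le_norm _ _
      _ ≤ ‖x₀‖ * (c * ‖ContinuousLinearMap.adjoint Y z‖) := by
          exact mul_le_mul_of_nonneg_left (hc z) (norm_nonneg _)
      _ = (c * ‖x₀‖) * ‖(⟨T z, LinearMap.mem_range_self T z⟩ : LinearMap.range T)‖ := by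
          ring_nf
          rfl
  let fc : (LinearMap.range T) →L[ℂ] ℂ := LinearMap.mkContinuous f (c * ‖x₀‖) hbound
  obtain ⟨F, hF, _⟩ := exists_extension_norm_eq (LinearMap.range T) fc
  set w₀ : H₂ := (InnerProductSpace.toDual ℂ H₂).symm F with hw₀
  refine ⟨w₀, ?_⟩
  refine ext_inner_right ℂ fun z => ?_
  have h1 : ⟪Y w₀, z⟫_ℂ = ⟪w₀, ContinuousLinearMap.adjoint Y z⟫_ℂ :=
    (ContinuousLinearMap.adjoint_inner_right Y w₀ z).symm
  have h2 : ⟪w₀, ContinuousLinearMap.adjoint Y z⟫_ℂ = F (T z) :=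
    InnerProductSpace.toDual_symm_apply
  have h3 : F (T z) = f ⟨T z, LinearMap.mem_range_self T z⟩ :=
    hF ⟨T z, LinearMap.mem_range_self T z⟩
  have h4 : g z = ⟪u, z⟫_ℂ := by simp [hg]
  rw [h1, h2, h3, hfval z, h4]

end helpers

theorem douglas_factorization
    {H₁ H₂ H₃ : Type*}
    [NormedAddCommGroup H₁] [InnerProductSpace ℂ H₁] [CompleteSpace H₁]
    [NormedAddCommGroup H₂] [InnerProductSpace ℂ H₂] [CompleteSpace H₂]
    [NormedAddCommGroup H₃] [InnerProductSpace ℂ H₃] [CompleteSpace H₃]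
    (X : H₁ →L[ℂ] H₃) (Y : H₂ →L[ℂ] H₃) :
    (Set.range X ⊆ Set.range Y ↔
      ∃ c : ℝ, 0 < c ∧ ∀ z : H₃,
        ‖ContinuousLinearMap.adjoint X z‖ ≤ c * ‖ContinuousLinearMap.adjoint Y z‖) ∧
    (Set.range X ⊆ Set.range Y ↔
      ∃ Z : H₁ →L[ℂ] H₂, X = Y.comp Z) := by
  have cToB : (∃ Z : H₁ →L[ℂ] H₂, X = Y.comp Z) →
      ∃ c : ℝ, 0 < c ∧ ∀ z : H₃,
        ‖ContinuousLinearMap.adjoint X z‖ ≤ c * ‖ContinuousLinearMap.adjoint Y z‖ := by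
    rintro ⟨Z, rfl⟩
    refine ⟨‖Z‖ + 1, by positivity, fun z => ?_⟩
    rw [ContinuousLinearMap.adjoint_comp]
    calc ‖(ContinuousLinearMap.adjoint Z) ((ContinuousLinearMap.adjoint Y) z)‖
        ≤ ‖ContinuousLinearMap.adjoint Z‖ * ‖ContinuousLinearMap.adjoint Y z‖ :=
          ContinuousLinearMap.le_opNorm _ _
      _ ≤ (‖Z‖ + 1) * ‖ContinuousLinearMap.adjoint Y z‖ := by
          have hn : ‖ContinuousLinearMap.adjoint Z‖ = ‖Z‖ :=
            LinearIsometryEquiv.norm_map ContinuousLinearMap.adjoint Z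
          rw [hn]
          exact mul_le_mul_of_nonneg_right (by linarith) (norm_nonneg _)
  constructor
  · constructor
    · intro ha
      exact cToB (douglas_aToC X Y ha)
    · rintro ⟨c, _, hc⟩
      exact douglas_bToA X Y c hc
  · exact ⟨douglas_aToC X Y, by rintro ⟨Z, rfl⟩ _ ⟨x, rfl⟩; exact ⟨Z x, rfl⟩⟩
end

section
/- If the system is null-controllable in time T, i.e. Ran S(T) ⊆ Ran 𝓑^T, then there exists a bounded linear feedback operator F : H → L²((0,T),U), i.e. a bounded linear operator satisfying S(T) + 𝓑^T ∘ F = 0; moreover F can be chosen so that F u₀ ∈ (Ker 𝓑^T)^⊥ for every u₀ ∈ H. -/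
open MeasureTheory Set Filter
open scoped InnerProductSpace Topology ENNReal

theorem null_controllable_implies_bounded_feedback
    {H U : Type*}
    [NormedAddCommGroup H] [InnerProductSpace ℂ H] [CompleteSpace H]
    [NormedAddCommGroup U] [InnerProductSpace ℂ U] [CompleteSpace U]
    (a T : ℝ) (hT : 0 < T)
    (S : ℝ → H →L[ℂ] H)
    (hS0 : S 0 = 1)
    (hSsemi : ∀ t s : ℝ, 0 ≤ t → 0 ≤ s → S (t + s) = (S t).comp (S s))
    (hScont : ∀ x : H, ContinuousOn (fun t => S t x) (Ici (0:ℝ)))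
    (hSbound : ∀ t : ℝ, 0 ≤ t → ‖S t‖ ≤ Real.exp (-(t * a)))
    (B : U →L[ℂ] H)
    (𝓑T : Lp U 2 (volume.restrict (Ioo (0:ℝ) T)) →L[ℂ] H)
    (h𝓑T : ∀ f : Lp U 2 (volume.restrict (Ioo (0:ℝ) T)),
      𝓑T f = ∫ s in Ioo (0:ℝ) T, S (T - s) (B (f s)))
    (hnc : Set.range (S T) ⊆ Set.range 𝓑T) :
    ∃ F : H →L[ℂ] Lp U 2 (volume.restrict (Ioo (0:ℝ) T)),
      S T + 𝓑T.comp F = 0 ∧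
      ∀ u₀ : H, F u₀ ∈ (LinearMap.ker (𝓑T : Lp U 2 (volume.restrict (Ioo (0:ℝ) T)) →ₗ[ℂ] H))ᗮ := by
  classical
  set E := ↥(Lp U 2 (volume.restrict (Ioo (0:ℝ) T))) with hE
  set K : Submodule ℂ E := (LinearMap.ker (𝓑T : Lp U 2 (volume.restrict (Ioo (0:ℝ) T)) →ₗ[ℂ] H))ᗮ with hK
  have hker_closed : IsClosed ((LinearMap.ker (𝓑T : Lp U 2 (volume.restrict (Ioo (0:ℝ) T)) →ₗ[ℂ] H) : Submodule ℂ E) : Set E) :=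
    ContinuousLinearMap.isClosed_ker 𝓑T
  haveI : CompleteSpace (LinearMap.ker (𝓑T : Lp U 2 (volume.restrict (Ioo (0:ℝ) T)) →ₗ[ℂ] H) : Submodule ℂ E) :=
    hker_closed.completeSpace_coe
  -- uniqueness
  have huniq : ∀ g₁ g₂ : E, g₁ ∈ K → g₂ ∈ K → 𝓑T g₁ = 𝓑T g₂ → g₁ = g₂ := by
    intro g₁ g₂ h₁ h₂ hB
    have hsub : g₁ - g₂ ∈ K := K.sub_mem h₁ h₂
    have hker : g₁ - g₂ ∈ LinearMap.ker (𝓑T : Lp U 2 (volume.restrict (Ioo (0:ℝ) T)) →ₗ[ℂ] H) := by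
      simp [LinearMap.mem_ker, map_sub, hB]
    have h0 : ⟪g₁ - g₂, g₁ - g₂⟫_ℂ = 0 :=
      (Submodule.mem_orthogonal _ _).1 hsub _ hker
    have := inner_self_eq_zero.mp h0
    exact sub_eq_zero.mp this
  -- existence
  have hex : ∀ u₀ : H, ∃ g : E, g ∈ K ∧ 𝓑T g = - S T u₀ := by
    intro u₀
    obtain ⟨f, hf⟩ := hnc ⟨-u₀, rfl⟩
    obtain ⟨y, hy, z, hz, hfz⟩ :=
      Submodule.exists_add_mem_mem_orthogonal (K := LinearMap.ker (𝓑T : Lp U 2 (volume.restrict (Ioo (0:ℝ) T)) →ₗ[ℂ] H)) (v := f)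
    refine ⟨z, hz, ?_⟩
    have hBy : 𝓑T y = 0 := hy
    have : 𝓑T f = 𝓑T y + 𝓑T z := by rw [hfz, map_add]
    rw [hBy, zero_add] at this
    rw [← this, hf, map_neg]
  choose g hgK hgB using hex
  have hadd : ∀ u v : H, g (u + v) = g u + g v := by
    intro u v
    refine (huniq _ _ (K.add_mem (hgK u) (hgK v)) (hgK (u + v)) ?_).symm
    rw [map_add, hgB, hgB, hgB, map_add, neg_add]
  have hsmul : ∀ (c : ℂ) (u : H), g (c • u) = c • g u := by
    intro c u
    refine (huniq _ _ (K.smul_mem c (hgK u)) (hgK (c • u)) ?_).symm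
    rw [_root_.map_smul, hgB, hgB, _root_.map_smul, smul_neg]
  let F₀ : H →ₗ[ℂ] E :=
    { toFun := g, map_add' := hadd, map_smul' := hsmul }
  have hgraph : (F₀.graph : Set (H × E)) =
      {p : H × E | p.2 ∈ K} ∩ {p : H × E | 𝓑T p.2 + S T p.1 = 0} := by
    ext p
    simp only [SetLike.mem_coe, LinearMap.mem_graph_iff, mem_inter_iff,
      mem_setOf_eq]
    constructor
    · rintro h
      rw [h]
      refine ⟨hgK p.1, ?_⟩
      show 𝓑T (g p.1) + S T p.1 = 0
      rw [hgB]
      simp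
    · rintro ⟨h1, h2⟩
      show p.2 = g p.1
      refine (huniq _ _ (hgK p.1) h1 ?_).symm
      rw [hgB]
      exact (eq_neg_of_add_eq_zero_left h2).symm
  have hclosed : IsClosed (F₀.graph : Set (H × E)) := by
    rw [hgraph]
    refine IsClosed.inter ?_ ?_
    · exact IsClosed.preimage continuous_snd (LinearMap.ker (𝓑T : Lp U 2 (volume.restrict (Ioo (0:ℝ) T)) →ₗ[ℂ] H)).isClosed_orthogonal
    · have : Continuous fun p : H × E => 𝓑T p.2 + S T p.1 :=
        (𝓑T.continuous.comp continuous_snd).add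
          ((S T).continuous.comp continuous_fst)
      exact isClosed_eq this continuous_const
  have hcont : Continuous F₀ := F₀.continuous_of_isClosed_graph hclosed
  refine ⟨⟨F₀, hcont⟩, ?_, fun u₀ => hgK u₀⟩
  ext u₀
  have := hgB u₀
  simp only [ContinuousLinearMap.add_apply, ContinuousLinearMap.comp_apply,
    ContinuousLinearMap.zero_apply, ContinuousLinearMap.coe_mk']
  show S T u₀ + 𝓑T (g u₀) = 0
  rw [this]; simp
end

section
/- Assume in addition that every S(t) is self-adjoint. Then the system is null-controllable in time T, i.e. Ran S(T) ⊆ Ran 𝓑^T, if and only if there exists a constant C > 0 such that the final-state-observability inequality ‖S(T)v‖²_H ≤ C² ∫₀^T ‖B* S(t) v‖²_U dt holds for all v ∈ H. -/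
open MeasureTheory Set Filter
open scoped InnerProductSpace Topology ENNReal

section Douglas

open ContinuousLinearMap

variable {E E' F : Type*}
  [NormedAddCommGroup E] [InnerProductSpace ℂ E] [CompleteSpace E]
  [NormedAddCommGroup E'] [InnerProductSpace ℂ E'] [CompleteSpace E']
  [NormedAddCommGroup F] [InnerProductSpace ℂ F] [CompleteSpace F]

/-- Douglas lemma, easy direction: a norm bound on adjoints gives range inclusion. -/
theorem range_subset_of_adjoint_bound (A : E' →L[ℂ] E) (G : F →L[ℂ] E) (C : ℝ)
    (h : ∀ v : E, ‖adjoint A v‖ ≤ C * ‖adjoint G v‖) :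
    Set.range A ⊆ Set.range G := by
  classical
  rintro x ⟨y, rfl⟩
  -- well-definedness of the functional below
  have key : ∀ v v' : E, adjoint G v = adjoint G v' →
      (⟪A y, v⟫_ℂ : ℂ) = ⟪A y, v'⟫_ℂ := by
    intro v v' hvv
    have h0 : adjoint G (v - v') = 0 := by rw [map_sub, hvv, sub_self]
    have h1 : adjoint A (v - v') = 0 := by
      have h2 := h (v - v')
      rw [h0, norm_zero, mul_zero] at h2
      exact norm_le_zero_iff.mp h2
    have h3 : (⟪A y, v - v'⟫_ℂ : ℂ) = 0 := by
      rw [← adjoint_inner_right A y (v - v'), h1, inner_zero_right]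
    rw [inner_sub_right, sub_eq_zero] at h3
    exact h3
  set p : Submodule ℂ F := LinearMap.range ((adjoint G : E →L[ℂ] F) : E →ₗ[ℂ] F) with hp
  have memp : ∀ v : E, adjoint G v ∈ p := fun v => LinearMap.mem_range.mpr ⟨v, rfl⟩
  let sel : p → E := fun w => (LinearMap.mem_range.mp w.2).choose
  have hsel : ∀ w : p, adjoint G (sel w) = (w : F) := fun w =>
    (LinearMap.mem_range.mp w.2).choose_spec
  have hval : ∀ (w : p) (v : E), adjoint G v = (w : F) →
      (⟪A y, sel w⟫_ℂ : ℂ) = ⟪A y, v⟫_ℂ := fun w v hv => key _ _ (by rw [hsel, hv])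
  let φ : p →ₗ[ℂ] ℂ :=
    { toFun := fun w => ⟪A y, sel w⟫_ℂ
      map_add' := by
        intro w w'
        show (⟪A y, sel (w + w')⟫_ℂ : ℂ) = ⟪A y, sel w⟫_ℂ + ⟪A y, sel w'⟫_ℂ
        have h5 : adjoint G (sel w + sel w') = ((w + w' : p) : F) := by
          rw [map_add, hsel, hsel]; rfl
        rw [hval _ _ h5, inner_add_right]
      map_smul' := by
        intro c w
        show (⟪A y, sel (c • w)⟫_ℂ : ℂ) = (RingHom.id ℂ) c • ⟪A y, sel w⟫_ℂ
        have h5 : adjoint G (c • sel w) = ((c • w : p) : F) := by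
          rw [_root_.map_smul, hsel]; rfl
        rw [hval _ _ h5, inner_smul_right]; rfl }
  have hbound : ∀ w : p, ‖φ w‖ ≤ (C * ‖y‖) * ‖w‖ := by
    intro w
    have h1 : (⟪A y, sel w⟫_ℂ : ℂ) = ⟪y, adjoint A (sel w)⟫_ℂ :=
      (adjoint_inner_right A y (sel w)).symm
    calc ‖(⟪A y, sel w⟫_ℂ : ℂ)‖ = ‖(⟪y, adjoint A (sel w)⟫_ℂ : ℂ)‖ := by rw [h1]
      _ ≤ ‖y‖ * ‖adjoint A (sel w)‖ := norm_inner_le_norm _ _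
      _ ≤ ‖y‖ * (C * ‖adjoint G (sel w)‖) :=
          mul_le_mul_of_nonneg_left (h (sel w)) (norm_nonneg y)
      _ = (C * ‖y‖) * ‖adjoint G (sel w)‖ := by ring
      _ = (C * ‖y‖) * ‖w‖ := by rw [hsel]; rfl
  let f : p →L[ℂ] ℂ := φ.mkContinuous (C * ‖y‖) hbound
  obtain ⟨g, hg, -⟩ := exists_extension_norm_eq p f
  set z : F := (InnerProductSpace.toDual ℂ F).symm g with hz
  refine ⟨z, ?_⟩
  apply ext_inner_right ℂ
  intro v
  have h1 : (⟪G z, v⟫_ℂ : ℂ) = ⟪z, adjoint G v⟫_ℂ := (adjoint_inner_right G z v).symm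
  have h2 : (⟪z, adjoint G v⟫_ℂ : ℂ) = g (adjoint G v) := by
    rw [hz, InnerProductSpace.toDual_symm_apply]
  have h3 : g (adjoint G v) = f ⟨adjoint G v, memp v⟩ := hg ⟨adjoint G v, memp v⟩
  have h4 : f ⟨adjoint G v, memp v⟩ = ⟪A y, v⟫_ℂ := hval ⟨adjoint G v, memp v⟩ v rfl
  rw [h1, h2, h3, h4]

/-- Douglas lemma, hard direction: range inclusion gives a norm bound on adjoints. -/
theorem adjoint_bound_of_range_subset (A : E' →L[ℂ] E) (G : F →L[ℂ] E)
    (h : Set.range A ⊆ Set.range G) :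
    ∃ C : ℝ, 0 < C ∧ ∀ v : E, ‖adjoint A v‖ ≤ C * ‖adjoint G v‖ := by
  classical
  set N : Submodule ℂ F := LinearMap.ker (G : F →ₗ[ℂ] E) with hN
  have hNclosed : IsClosed (N : Set F) := ContinuousLinearMap.isClosed_ker G
  haveI : CompleteSpace N := hNclosed.completeSpace_coe
  have uniq : ∀ w w' : F, w ∈ Nᗮ → w' ∈ Nᗮ → G w = G w' → w = w' := by
    intro w w' hw hw' hG
    have hmemN : w - w' ∈ N := by
      simp only [hN, LinearMap.mem_ker, ContinuousLinearMap.coe_coe, map_sub, hG, sub_self]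
    have hmemO : w - w' ∈ Nᗮ := sub_mem hw hw'
    have : w - w' ∈ (⊥ : Submodule ℂ F) :=
      (N.orthogonal_disjoint).le_bot ⟨hmemN, hmemO⟩
    rw [Submodule.mem_bot] at this
    exact sub_eq_zero.mp this
  have hsub : ∀ x : E', A x ∈ Set.range G := fun x => h (Set.mem_range_self x)
  let D₀ : E' → F := fun x => (Nᗮ.orthogonalProjectionOnto ((hsub x).choose) : F)
  have hD₀mem : ∀ x, D₀ x ∈ Nᗮ := fun x => SetLike.coe_mem _
  have hD₀val : ∀ x, G (D₀ x) = A x := by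
    intro x
    have hf : G ((hsub x).choose) = A x := (hsub x).choose_spec
    have hmem : (hsub x).choose - D₀ x ∈ N := by
      have := Submodule.sub_starProjection_mem_orthogonal (K := Nᗮ) ((hsub x).choose)
      rwa [Submodule.orthogonal_orthogonal] at this
    have : G ((hsub x).choose - D₀ x) = 0 := hmem
    rw [map_sub, sub_eq_zero] at this
    rw [← this, hf]
  have hchar : ∀ (x : E') (w : F), w ∈ Nᗮ → G w = A x → w = D₀ x := by
    intro x w hw hGw
    exact uniq w (D₀ x) hw (hD₀mem x) (by rw [hGw, hD₀val])
  let D : E' →ₗ[ℂ] F :=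
    { toFun := D₀
      map_add' := fun x x' => by
        refine (hchar (x + x') (D₀ x + D₀ x') (add_mem (hD₀mem x) (hD₀mem x')) ?_).symm
        rw [map_add, hD₀val, hD₀val, map_add]
      map_smul' := fun c x => by
        refine (hchar (c • x) (c • D₀ x) (Submodule.smul_mem _ c (hD₀mem x)) ?_).symm
        rw [_root_.map_smul, hD₀val, _root_.map_smul] }
  have hDcont : Continuous D := by
    apply D.continuous_of_seq_closed_graph
    intro u x f hu hDu
    have h1 : Tendsto (fun n => G (D (u n))) atTop (𝓝 (G f)) :=
      (G.continuous.tendsto f).comp hDu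
    have h2 : (fun n => G (D (u n))) = fun n => A (u n) := by
      funext n; exact hD₀val (u n)
    have h3 : Tendsto (fun n => A (u n)) atTop (𝓝 (A x)) :=
      (A.continuous.tendsto x).comp hu
    have hGf : G f = A x := tendsto_nhds_unique h1 (h2 ▸ h3)
    have hfmem : f ∈ Nᗮ :=
      N.isClosed_orthogonal.mem_of_tendsto hDu
        (Eventually.of_forall fun n => hD₀mem (u n))
    exact hchar x f hfmem hGf
  let Dc : E' →L[ℂ] F := ⟨D, hDcont⟩
  have hcomp : A = G ∘L Dc := by
    ext x
    exact (hD₀val x).symm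
  refine ⟨‖adjoint Dc‖ + 1, by positivity, fun v => ?_⟩
  have h1 : adjoint A v = adjoint Dc (adjoint G v) := by
    rw [hcomp, adjoint_comp]; rfl
  calc ‖adjoint A v‖ = ‖adjoint Dc (adjoint G v)‖ := by rw [h1]
    _ ≤ ‖adjoint Dc‖ * ‖adjoint G v‖ := le_opNorm _ _
    _ ≤ (‖adjoint Dc‖ + 1) * ‖adjoint G v‖ :=
        mul_le_mul_of_nonneg_right (by linarith) (norm_nonneg _)

end Douglas

section JointContinuity

/-- A strongly continuous, locally-bounded family of operators is jointly continuous
(in the version truncated at `0`, which is globally defined). -/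
theorem semigroup_joint_continuous {H : Type*} [NormedAddCommGroup H] [NormedSpace ℂ H]
    (a : ℝ) (S : ℝ → H →L[ℂ] H)
    (hScont : ∀ x : H, ContinuousOn (fun t => S t x) (Ici (0:ℝ)))
    (hSbound : ∀ t : ℝ, 0 ≤ t → ‖S t‖ ≤ Real.exp (-(t * a))) :
    Continuous (fun p : ℝ × H => S (max p.1 0) p.2) := by
  have hone : ∀ x : H, Continuous (fun t : ℝ => S (max t 0) x) := fun x =>
    (hScont x).comp_continuous (continuous_id.max continuous_const)
      (fun t => Set.mem_Ici.mpr (le_max_right _ _))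
  rw [continuous_iff_continuousAt]
  rintro ⟨t₀, x₀⟩
  set M := Real.exp ((|t₀| + 1) * |a|) with hM
  have hMle : ∀ t : ℝ, t ≤ |t₀| + 1 → ‖S (max t 0)‖ ≤ M := by
    intro t ht
    refine (hSbound _ (le_max_right _ _)).trans (Real.exp_le_exp.mpr ?_)
    have h1 : max t 0 ≤ |t₀| + 1 := max_le ht (by positivity)
    calc -(max t 0 * a) ≤ |max t 0 * a| := neg_le_abs _
      _ = max t 0 * |a| := by rw [abs_mul, abs_of_nonneg (le_max_right t 0)]
      _ ≤ (|t₀| + 1) * |a| := mul_le_mul_of_nonneg_right h1 (abs_nonneg a)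
  have key : Tendsto (fun p : ℝ × H => S (max p.1 0) p.2 - S (max t₀ 0) x₀)
      (𝓝 (t₀, x₀)) (𝓝 0) := by
    apply squeeze_zero_norm'
      (a := fun p : ℝ × H => M * ‖p.2 - x₀‖ + ‖S (max p.1 0) x₀ - S (max t₀ 0) x₀‖)
    · have hev : ∀ᶠ p : ℝ × H in 𝓝 (t₀, x₀), p.1 ≤ |t₀| + 1 :=
        (continuous_fst.tendsto (t₀, x₀)).eventually
          (eventually_le_nhds (lt_of_le_of_lt (le_abs_self t₀) (lt_add_one _)))
      filter_upwards [hev] with p hp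
      have hsplit : S (max p.1 0) p.2 - S (max t₀ 0) x₀
          = S (max p.1 0) (p.2 - x₀) + (S (max p.1 0) x₀ - S (max t₀ 0) x₀) := by
        rw [map_sub]; abel
      rw [hsplit]
      refine (norm_add_le _ _).trans (add_le_add_left ?_ _)
      calc ‖S (max p.1 0) (p.2 - x₀)‖ ≤ ‖S (max p.1 0)‖ * ‖p.2 - x₀‖ :=
            ContinuousLinearMap.le_opNorm _ _
        _ ≤ M * ‖p.2 - x₀‖ := mul_le_mul_of_nonneg_right (hMle _ hp) (norm_nonneg _)
    · have h1 : Continuous (fun p : ℝ × H => M * ‖p.2 - x₀‖ +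
          ‖S (max p.1 0) x₀ - S (max t₀ 0) x₀‖) := by
        apply Continuous.add
        · exact continuous_const.mul ((continuous_snd.sub continuous_const).norm)
        · exact (((hone x₀).comp continuous_fst).sub continuous_const).norm
      have := h1.tendsto (t₀, x₀)
      simpa using this
  have : Tendsto (fun p : ℝ × H => S (max p.1 0) p.2) (𝓝 (t₀, x₀))
      (𝓝 (S (max t₀ 0) x₀)) := by
    have h2 := key.add_const (S (max t₀ 0) x₀)
    simpa using h2
  exact this

end JointContinuity

section AdjointComputation

open ContinuousLinearMap

/-- The key computation : the square of the norm of the adjoint of the controllability map. -/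
theorem BT_adjoint_norm_sq
    {H U : Type*}
    [NormedAddCommGroup H] [InnerProductSpace ℂ H] [CompleteSpace H]
    [NormedAddCommGroup U] [InnerProductSpace ℂ U] [CompleteSpace U]
    (a T : ℝ) (hT : 0 < T)
    (S : ℝ → H →L[ℂ] H)
    (hScont : ∀ x : H, ContinuousOn (fun t => S t x) (Ici (0:ℝ)))
    (hSbound : ∀ t : ℝ, 0 ≤ t → ‖S t‖ ≤ Real.exp (-(t * a)))
    (B : U →L[ℂ] H)
    (𝓑T : Lp U 2 (volume.restrict (Ioo (0:ℝ) T)) →L[ℂ] H)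
    (h𝓑T : ∀ f : Lp U 2 (volume.restrict (Ioo (0:ℝ) T)),
      𝓑T f = ∫ s in Ioo (0:ℝ) T, S (T - s) (B (f s)))
    (hSsa : ∀ t : ℝ, 0 ≤ t → IsSelfAdjoint (S t)) (v : H) :
    ‖ContinuousLinearMap.adjoint 𝓑T v‖ ^ 2
      = ∫ t in Ioo (0:ℝ) T, ‖ContinuousLinearMap.adjoint B (S t v)‖ ^ 2 := by
  haveI hμfin : IsFiniteMeasure (volume.restrict (Ioo (0:ℝ) T)) :=
    ⟨by rw [Measure.restrict_apply_univ]; exact measure_Ioo_lt_top⟩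
  have hμmem : ∀ᵐ s ∂(volume.restrict (Ioo (0:ℝ) T)), s ∈ Ioo (0:ℝ) T := ae_restrict_mem measurableSet_Ioo
  have hΦ : Continuous (fun p : ℝ × H => S (max p.1 0) p.2) :=
    semigroup_joint_continuous a S hScont hSbound
  set M := Real.exp (T * |a|) with hMdef
  have hMle : ∀ t : ℝ, t ≤ T → ‖S (max t 0)‖ ≤ M := by
    intro t ht
    refine (hSbound _ (le_max_right _ _)).trans (Real.exp_le_exp.mpr ?_)
    have h1 : max t 0 ≤ T := max_le ht hT.le
    calc -(max t 0 * a) ≤ |max t 0 * a| := neg_le_abs _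
      _ = max t 0 * |a| := by rw [abs_mul, abs_of_nonneg (le_max_right t 0)]
      _ ≤ T * |a| := mul_le_mul_of_nonneg_right h1 (abs_nonneg a)
  -- the candidate for the adjoint applied to `v`
  set gv : ℝ → U := fun s => adjoint B (S (max (T - s) 0) v) with hgvdef
  have hgvcont : Continuous gv := by
    apply (adjoint B).continuous.comp
    exact hΦ.comp ((continuous_const.sub continuous_id).prodMk continuous_const)
  have hgveq : ∀ s, s ∈ Ioo (0:ℝ) T → gv s = adjoint B (S (T - s) v) := by
    intro s hs
    have : max (T - s) 0 = T - s := max_eq_left (by linarith [hs.1, hs.2])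
    rw [hgvdef]; simp only [this]
  have hgvmem : MemLp gv 2 (volume.restrict (Ioo (0:ℝ) T)) := by
    apply MemLp.of_bound hgvcont.aestronglyMeasurable (‖(adjoint B : H →L[ℂ] U)‖ * (M * ‖v‖))
    filter_upwards [hμmem] with s hs
    calc ‖adjoint B (S (max (T - s) 0) v)‖
        ≤ ‖(adjoint B : H →L[ℂ] U)‖ * ‖S (max (T - s) 0) v‖ := le_opNorm _ _
      _ ≤ ‖(adjoint B : H →L[ℂ] U)‖ * (M * ‖v‖) := by
          refine mul_le_mul_of_nonneg_left ?_ (norm_nonneg _)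
          calc ‖S (max (T - s) 0) v‖ ≤ ‖S (max (T - s) 0)‖ * ‖v‖ := le_opNorm _ _
            _ ≤ M * ‖v‖ := mul_le_mul_of_nonneg_right
                (hMle _ (by linarith [hs.1, hs.2])) (norm_nonneg _)
  -- the adjoint formula
  have hadj : adjoint 𝓑T v = hgvmem.toLp gv := by
    apply ext_inner_left ℂ
    intro f
    rw [adjoint_inner_right, h𝓑T f]
    set F : ℝ → H := fun s => S (max (T - s) 0) (B (f s)) with hFdef
    have hFmeas : AEStronglyMeasurable F (volume.restrict (Ioo (0:ℝ) T)) := by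
      rw [hFdef]
      exact hΦ.comp_aestronglyMeasurable
        (((continuous_const.sub continuous_id).aestronglyMeasurable).prodMk
          (B.continuous.comp_aestronglyMeasurable (Lp.aestronglyMeasurable f)))
    have hint1 : Integrable (fun s => ‖f s‖) (volume.restrict (Ioo (0:ℝ) T)) :=
      (memLp_one_iff_integrable.mp
        ((Lp.memLp f).mono_exponent (by norm_num))).norm
    have hFint : Integrable F (volume.restrict (Ioo (0:ℝ) T)) := by
      apply Integrable.mono (hint1.const_mul (M * ‖B‖)) hFmeas
      filter_upwards [hμmem] with s hs
      have hb : ‖F s‖ ≤ M * ‖B‖ * ‖f s‖ := by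
        calc ‖S (max (T - s) 0) (B (f s))‖
            ≤ ‖S (max (T - s) 0)‖ * ‖B (f s)‖ := le_opNorm _ _
          _ ≤ M * (‖B‖ * ‖f s‖) := mul_le_mul (hMle _ (by linarith [hs.1, hs.2]))
              (le_opNorm _ _) (norm_nonneg _) (Real.exp_nonneg _)
          _ = M * ‖B‖ * ‖f s‖ := by ring
      refine hb.trans ?_
      rw [Real.norm_eq_abs, abs_of_nonneg]
      positivity
    have hcongr : ∫ s in Ioo (0:ℝ) T, S (T - s) (B (f s)) = ∫ s, F s ∂(volume.restrict (Ioo (0:ℝ) T)) := by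
      apply integral_congr_ae
      filter_upwards [hμmem] with s hs
      have : max (T - s) 0 = T - s := max_eq_left (by linarith [hs.1, hs.2])
      rw [hFdef]; simp only [this]
    rw [hcongr]
    have step1 : (⟪∫ s, F s ∂(volume.restrict (Ioo (0:ℝ) T)), v⟫_ℂ : ℂ) = ∫ s, ⟪F s, v⟫_ℂ ∂(volume.restrict (Ioo (0:ℝ) T)) := by
      rw [← inner_conj_symm, ← integral_inner hFint, ← integral_conj]
      simp_rw [inner_conj_symm]
    have step2 : ∫ s, (⟪F s, v⟫_ℂ : ℂ) ∂(volume.restrict (Ioo (0:ℝ) T)) = ∫ s, ⟪f s, gv s⟫_ℂ ∂(volume.restrict (Ioo (0:ℝ) T)) := by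
      apply integral_congr_ae
      filter_upwards [hμmem] with s _
      rw [hFdef, hgvdef]
      show (⟪S (max (T - s) 0) (B (f s)), v⟫_ℂ : ℂ)
        = ⟪f s, adjoint B (S (max (T - s) 0) v)⟫_ℂ
      rw [← adjoint_inner_right (S (max (T - s) 0)),
        ContinuousLinearMap.isSelfAdjoint_iff'.mp (hSsa _ (le_max_right _ _)),
        ← adjoint_inner_right B]
    have step3 : ∫ s, (⟪f s, gv s⟫_ℂ : ℂ) ∂(volume.restrict (Ioo (0:ℝ) T)) = ⟪f, hgvmem.toLp gv⟫_ℂ := by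
      rw [L2.inner_def]
      apply integral_congr_ae
      filter_upwards [hgvmem.coeFn_toLp] with s hs
      rw [hs]
    rw [step1, step2, step3]
  -- the squared-norm formula in `L²`
  have hnorm : ∀ w : Lp U 2 (volume.restrict (Ioo (0:ℝ) T)), ‖w‖ ^ 2 = ∫ s, ‖w s‖ ^ 2 ∂(volume.restrict (Ioo (0:ℝ) T)) := by
    intro w
    calc ‖w‖ ^ 2 = RCLike.re (⟪w, w⟫_ℂ : ℂ) := (@inner_self_eq_norm_sq ℂ _ _ _ _ w).symm
      _ = RCLike.re (∫ s, (⟪w s, w s⟫_ℂ : ℂ) ∂(volume.restrict (Ioo (0:ℝ) T))) := by rw [L2.inner_def]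
      _ = ∫ s, RCLike.re (⟪w s, w s⟫_ℂ : ℂ) ∂(volume.restrict (Ioo (0:ℝ) T)) :=
          (integral_re (L2.integrable_inner w w)).symm
      _ = ∫ s, ‖w s‖ ^ 2 ∂(volume.restrict (Ioo (0:ℝ) T)) := by
          apply integral_congr_ae
          filter_upwards with s
          exact @inner_self_eq_norm_sq ℂ _ _ _ _ (w s)
  -- change of variables
  have hcov : ∀ h : ℝ → ℝ, ∫ s in Ioo (0:ℝ) T, h (T - s) = ∫ t in Ioo (0:ℝ) T, h t := by
    intro h
    have h1 : ∫ s in Ioo (0:ℝ) T, h (T - s) = ∫ s in (0:ℝ)..T, h (T - s) := by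
      rw [intervalIntegral.integral_of_le hT.le, integral_Ioc_eq_integral_Ioo]
    have h2 : ∫ t in Ioo (0:ℝ) T, h t = ∫ t in (0:ℝ)..T, h t := by
      rw [intervalIntegral.integral_of_le hT.le, integral_Ioc_eq_integral_Ioo]
    rw [h1, h2, intervalIntegral.integral_comp_sub_left h T, sub_self, sub_zero]
  calc ‖adjoint 𝓑T v‖ ^ 2 = ‖hgvmem.toLp gv‖ ^ 2 := by rw [hadj]
    _ = ∫ s, ‖(hgvmem.toLp gv : Lp U 2 (volume.restrict (Ioo (0:ℝ) T))) s‖ ^ 2 ∂(volume.restrict (Ioo (0:ℝ) T)) := hnorm _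
    _ = ∫ s, ‖gv s‖ ^ 2 ∂(volume.restrict (Ioo (0:ℝ) T)) := by
        apply integral_congr_ae
        filter_upwards [hgvmem.coeFn_toLp] with s hs
        rw [hs]
    _ = ∫ s in Ioo (0:ℝ) T, ‖adjoint B (S (T - s) v)‖ ^ 2 := by
        apply integral_congr_ae
        filter_upwards [hμmem] with s hs
        rw [hgveq s hs]
    _ = ∫ t in Ioo (0:ℝ) T, ‖adjoint B (S t v)‖ ^ 2 :=
        hcov (fun t => ‖adjoint B (S t v)‖ ^ 2)

end AdjointComputation

theorem null_controllable_iff_final_state_observability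
    {H U : Type*}
    [NormedAddCommGroup H] [InnerProductSpace ℂ H] [CompleteSpace H]
    [NormedAddCommGroup U] [InnerProductSpace ℂ U] [CompleteSpace U]
    (a T : ℝ) (hT : 0 < T)
    (S : ℝ → H →L[ℂ] H)
    (hS0 : S 0 = 1)
    (hSsemi : ∀ t s : ℝ, 0 ≤ t → 0 ≤ s → S (t + s) = (S t).comp (S s))
    (hScont : ∀ x : H, ContinuousOn (fun t => S t x) (Ici (0:ℝ)))
    (hSbound : ∀ t : ℝ, 0 ≤ t → ‖S t‖ ≤ Real.exp (-(t * a)))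
    (B : U →L[ℂ] H)
    (𝓑T : Lp U 2 (volume.restrict (Ioo (0:ℝ) T)) →L[ℂ] H)
    (h𝓑T : ∀ f : Lp U 2 (volume.restrict (Ioo (0:ℝ) T)),
      𝓑T f = ∫ s in Ioo (0:ℝ) T, S (T - s) (B (f s)))
    (hSsa : ∀ t : ℝ, 0 ≤ t → IsSelfAdjoint (S t)) :
    Set.range (S T) ⊆ Set.range 𝓑T ↔
      ∃ C : ℝ, 0 < C ∧ ∀ v : H,
        ‖S T v‖ ^ 2 ≤ C ^ 2 * ∫ t in Ioo (0:ℝ) T,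
          ‖ContinuousLinearMap.adjoint B (S t v)‖ ^ 2 := by
  have hkey : ∀ v : H, ‖ContinuousLinearMap.adjoint 𝓑T v‖ ^ 2
      = ∫ t in Ioo (0:ℝ) T, ‖ContinuousLinearMap.adjoint B (S t v)‖ ^ 2 :=
    BT_adjoint_norm_sq a T hT S hScont hSbound B 𝓑T h𝓑T hSsa
  have hSTsa : ContinuousLinearMap.adjoint (S T) = S T :=
    ContinuousLinearMap.isSelfAdjoint_iff'.mp (hSsa T hT.le)
  constructor
  · intro hinc
    obtain ⟨C, hC, hb⟩ := adjoint_bound_of_range_subset (S T) 𝓑T hinc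
    refine ⟨C, hC, fun v => ?_⟩
    have h1 := hb v
    rw [hSTsa] at h1
    rw [← hkey v]
    calc ‖S T v‖ ^ 2 ≤ (C * ‖ContinuousLinearMap.adjoint 𝓑T v‖) ^ 2 :=
          pow_le_pow_left₀ (norm_nonneg _) h1 2
      _ = C ^ 2 * ‖ContinuousLinearMap.adjoint 𝓑T v‖ ^ 2 := mul_pow _ _ _
  · rintro ⟨C, hC, hb⟩
    apply range_subset_of_adjoint_bound (S T) 𝓑T C
    intro v
    have h2 := hb v
    rw [← hkey v] at h2
    rw [hSTsa]
    have h3 : ‖S T v‖ ^ 2 ≤ (C * ‖ContinuousLinearMap.adjoint 𝓑T v‖) ^ 2 := by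
      rw [mul_pow]; exact h2
    have h4 : (0:ℝ) ≤ C * ‖ContinuousLinearMap.adjoint 𝓑T v‖ := by positivity
    exact (pow_le_pow_iff_left₀ (norm_nonneg _) h4 two_ne_zero).mp h3
end

section
/- Let P_n, n ∈ ℕ, be orthogonal projections in H converging strongly to the identity operator. Suppose there is a constant C > 0 such that for all n ∈ ℕ and all v ∈ H the observability inequality ‖S_n(T) P_n v‖²_H ≤ C² ∫₀^T ‖B_n* S_n(t) P_n v‖²_U dt holds. Then the limiting observability inequality ‖S(T) v‖²_H ≤ C² ∫₀^T ‖B* S(t) v‖²_U dt holds for all v ∈ H. -/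
open MeasureTheory Set Filter
open scoped InnerProductSpace Topology ENNReal

/-- A self-adjoint idempotent is a contraction. -/
lemma proj_contraction {H : Type*} [NormedAddCommGroup H] [InnerProductSpace ℂ H]
    [CompleteSpace H] (P : H →L[ℂ] H) (hsa : IsSelfAdjoint P) (hid : IsIdempotentElem P)
    (v : H) : ‖P v‖ ≤ ‖v‖ := by
  rcases eq_or_lt_of_le (norm_nonneg (P v)) with h0 | h0
  · rw [← h0]; exact norm_nonneg v
  have key : ‖P v‖ * ‖P v‖ ≤ ‖v‖ * ‖P v‖ := by
    have h1 : (⟪P v, P v⟫_ℂ) = ⟪v, P v⟫_ℂ := by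
      have h2 := ContinuousLinearMap.adjoint_inner_right P v (P v)
      rw [hsa.adjoint_eq] at h2
      rw [← h2]
      congr 1
      have h3 : P (P v) = (P * P) v := rfl
      rw [h3, hid.eq]
    calc ‖P v‖ * ‖P v‖ = RCLike.re (⟪P v, P v⟫_ℂ) := (inner_self_eq_norm_mul_norm (𝕜 := ℂ) _).symm
      _ = RCLike.re (⟪v, P v⟫_ℂ) := by rw [h1]
      _ ≤ ‖(⟪v, P v⟫_ℂ)‖ := RCLike.re_le_norm _
      _ ≤ ‖v‖ * ‖P v‖ := norm_inner_le_norm v (P v)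
  exact le_of_mul_le_mul_right key h0

/-- Uniformly bounded operators converging strongly at a point, applied to a sequence
converging to that point. -/
lemma tendsto_apply_strong {E F : Type*} [NormedAddCommGroup E] [NormedSpace ℂ E]
    [NormedAddCommGroup F] [NormedSpace ℂ F]
    (A : ℕ → E →L[ℂ] F) (A0 : E →L[ℂ] F) (M : ℝ)
    {x : ℕ → E} {x0 : E}
    (hM : ∀ n, ‖A n‖ ≤ M)
    (hA : Tendsto (fun n => A n x0) atTop (𝓝 (A0 x0)))
    (hx : Tendsto x atTop (𝓝 x0)) :
    Tendsto (fun n => A n (x n)) atTop (𝓝 (A0 x0)) := by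
  rw [tendsto_iff_norm_sub_tendsto_zero] at hx hA ⊢
  have hMnn : 0 ≤ M := le_trans (norm_nonneg _) (hM 0)
  apply squeeze_zero (fun n => norm_nonneg _)
    (g := fun n => M * ‖x n - x0‖ + ‖A n x0 - A0 x0‖)
  · intro n
    calc ‖A n (x n) - A0 x0‖
        = ‖A n (x n - x0) + (A n x0 - A0 x0)‖ := by
          congr 1
          simp [map_sub]
      _ ≤ ‖A n (x n - x0)‖ + ‖A n x0 - A0 x0‖ := norm_add_le _ _
      _ ≤ M * ‖x n - x0‖ + ‖A n x0 - A0 x0‖ := by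
          gcongr
          calc ‖A n (x n - x0)‖ ≤ ‖A n‖ * ‖x n - x0‖ := (A n).le_opNorm _
            _ ≤ M * ‖x n - x0‖ := by gcongr; exact hM n
  · have := (hx.const_mul M).add hA
    simpa using this

theorem observability_inequality_carries_over_to_limit
    {H U : Type*}
    [NormedAddCommGroup H] [InnerProductSpace ℂ H] [CompleteSpace H]
    [NormedAddCommGroup U] [InnerProductSpace ℂ U] [CompleteSpace U]
    (a T : ℝ) (hT : 0 < T)
    (S : ℝ → H →L[ℂ] H) (Sn : ℕ → ℝ → H →L[ℂ] H)
    (hS0 : S 0 = 1)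
    (hSsemi : ∀ t s : ℝ, 0 ≤ t → 0 ≤ s → S (t + s) = (S t).comp (S s))
    (hScont : ∀ x : H, ContinuousOn (fun t => S t x) (Ici (0:ℝ)))
    (hSbound : ∀ t : ℝ, 0 ≤ t → ‖S t‖ ≤ Real.exp (-(t * a)))
    (hSn0 : ∀ n, Sn n 0 = 1)
    (hSnsemi : ∀ n, ∀ t s : ℝ, 0 ≤ t → 0 ≤ s →
      Sn n (t + s) = (Sn n t).comp (Sn n s))
    (hSncont : ∀ n, ∀ x : H, ContinuousOn (fun t => Sn n t x) (Ici (0:ℝ)))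
    (hSnbound : ∀ n, ∀ t : ℝ, 0 ≤ t → ‖Sn n t‖ ≤ Real.exp (-(t * a)))
    (hSconv : ∀ t : ℝ, 0 < t → ∀ x : H,
      Tendsto (fun n => Sn n t x) atTop (nhds (S t x)))
    (B : U →L[ℂ] H) (Bn : ℕ → U →L[ℂ] H)
    (hBconv : ∀ v : U, Tendsto (fun n => Bn n v) atTop (nhds (B v)))
    (hBadjconv : ∀ x : H,
      Tendsto (fun n => ContinuousLinearMap.adjoint (Bn n) x) atTop
        (nhds (ContinuousLinearMap.adjoint B x)))
    (P : ℕ → (H →L[ℂ] H))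
    (hPproj : ∀ n, IsSelfAdjoint (P n) ∧ IsIdempotentElem (P n))
    (hPconv : ∀ v : H, Tendsto (fun n => P n v) atTop (nhds v))
    (C : ℝ) (hC : 0 < C)
    (hobs : ∀ n, ∀ v : H,
      ‖Sn n T (P n v)‖ ^ 2 ≤ C ^ 2 * ∫ t in Ioo (0:ℝ) T,
        ‖ContinuousLinearMap.adjoint (Bn n) (Sn n t (P n v))‖ ^ 2) :
    ∀ v : H,
      ‖S T v‖ ^ 2 ≤ C ^ 2 * ∫ t in Ioo (0:ℝ) T,
        ‖ContinuousLinearMap.adjoint B (S t v)‖ ^ 2 := by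
  intro v
  -- uniform bound on the adjoints
  obtain ⟨M, hM⟩ : ∃ M, ∀ n, ‖ContinuousLinearMap.adjoint (Bn n)‖ ≤ M := by
    apply banach_steinhaus
    intro x
    obtain ⟨Cx, hCx⟩ := (hBadjconv x).norm.bddAbove_range
    exact ⟨Cx, fun n => hCx ⟨n, rfl⟩⟩
  have hMnn : 0 ≤ M := le_trans (norm_nonneg _) (hM 0)
  -- exponential bound on [0, T]
  set D : ℝ := Real.exp (T * |a|) with hD
  have hDnn : 0 ≤ D := (Real.exp_pos _).le
  have hexp : ∀ t : ℝ, 0 ≤ t → t ≤ T → Real.exp (-(t * a)) ≤ D := by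
    intro t ht htT
    apply Real.exp_le_exp.2
    calc -(t * a) ≤ |t * a| := neg_le_abs _
      _ = t * |a| := by rw [abs_mul, abs_of_nonneg ht]
      _ ≤ T * |a| := by gcongr
  -- convergence of the trajectories
  have htraj : ∀ t : ℝ, 0 < t →
      Tendsto (fun n => Sn n t (P n v)) atTop (𝓝 (S t v)) := by
    intro t ht
    exact tendsto_apply_strong (fun n => Sn n t) (S t) (Real.exp (-(t * a)))
      (fun n => hSnbound n t ht.le) (hSconv t ht v) (hPconv v)
  -- pointwise convergence of the integrands
  have hptwise : ∀ t ∈ Ioo (0:ℝ) T,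
      Tendsto (fun n => ‖ContinuousLinearMap.adjoint (Bn n) (Sn n t (P n v))‖ ^ 2)
        atTop (𝓝 (‖ContinuousLinearMap.adjoint B (S t v)‖ ^ 2)) := by
    intro t ht
    have h1 : Tendsto (fun n => ContinuousLinearMap.adjoint (Bn n) (Sn n t (P n v)))
        atTop (𝓝 (ContinuousLinearMap.adjoint B (S t v))) :=
      tendsto_apply_strong (fun n => ContinuousLinearMap.adjoint (Bn n))
        (ContinuousLinearMap.adjoint B) M hM (hBadjconv _) (htraj t ht.1)
    exact (h1.norm).pow 2
  -- measurability of the integrands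
  have hmeas : ∀ n, AEStronglyMeasurable
      (fun t => ‖ContinuousLinearMap.adjoint (Bn n) (Sn n t (P n v))‖ ^ 2)
      (volume.restrict (Ioo (0:ℝ) T)) := by
    intro n
    apply ContinuousOn.aestronglyMeasurable _ measurableSet_Ioo
    have h1 : ContinuousOn (fun t => Sn n t (P n v)) (Ioo (0:ℝ) T) :=
      (hSncont n (P n v)).mono (fun t ht => le_of_lt ht.1)
    exact (((ContinuousLinearMap.adjoint (Bn n)).continuous.comp_continuousOn h1).norm).pow 2
  -- uniform bound on the integrands
  set K : ℝ := (M * (D * ‖v‖)) ^ 2 with hK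
  have hbound : ∀ n, ∀ t ∈ Ioo (0:ℝ) T,
      ‖‖ContinuousLinearMap.adjoint (Bn n) (Sn n t (P n v))‖ ^ 2‖ ≤ K := by
    intro n t ht
    rw [Real.norm_of_nonneg (by positivity)]
    apply pow_le_pow_left₀ (norm_nonneg _)
    calc ‖ContinuousLinearMap.adjoint (Bn n) (Sn n t (P n v))‖
        ≤ ‖ContinuousLinearMap.adjoint (Bn n)‖ * ‖Sn n t (P n v)‖ :=
          ContinuousLinearMap.le_opNorm _ _
      _ ≤ M * (D * ‖v‖) := by
          apply mul_le_mul (hM n) _ (norm_nonneg _) hMnn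
          calc ‖Sn n t (P n v)‖ ≤ ‖Sn n t‖ * ‖P n v‖ := ContinuousLinearMap.le_opNorm _ _
            _ ≤ D * ‖v‖ := by
                apply mul_le_mul ((hSnbound n t ht.1.le).trans (hexp t ht.1.le ht.2.le))
                  (proj_contraction _ (hPproj n).1 (hPproj n).2 v) (norm_nonneg _) hDnn
  -- convergence of the integrals
  have hint : Tendsto (fun n => ∫ t in Ioo (0:ℝ) T,
      ‖ContinuousLinearMap.adjoint (Bn n) (Sn n t (P n v))‖ ^ 2) atTop
      (𝓝 (∫ t in Ioo (0:ℝ) T, ‖ContinuousLinearMap.adjoint B (S t v)‖ ^ 2)) := by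
    apply tendsto_integral_of_dominated_convergence (fun _ => K) hmeas
    · exact integrableOn_const measure_Ioo_lt_top.ne
    · intro n
      exact (ae_restrict_iff' measurableSet_Ioo).2 (Eventually.of_forall (hbound n))
    · exact (ae_restrict_iff' measurableSet_Ioo).2 (Eventually.of_forall hptwise)
  -- convergence of the left-hand sides
  have hlhs : Tendsto (fun n => ‖Sn n T (P n v)‖ ^ 2) atTop (𝓝 (‖S T v‖ ^ 2)) :=
    ((htraj T hT).norm).pow 2
  exact le_of_tendsto_of_tendsto hlhs (hint.const_mul (C ^ 2))
    (Eventually.of_forall (fun n => hobs n v))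
end
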